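/- arXiv:1003.1550 — 5 statements merged into one kernel-verified Lean document; each statement's English description precedes it below -/
import Mathlib

section
/- (Roberts' Affine Maximizer Theorem) Suppose T_i = ℝ^m for all i ∈ N, i.e. 𝕋ⁿ = ℝ^{m×n}. If f is an implementable social choice function and satisfies non-imposition, then there exist a weight vector λ ∈ ℝⁿ with λ ≥ 0 componentwise and λ ≠ 0, and a function κ : A → ℝ, such that for all t ∈ 𝕋ⁿ: f(t) ∈ argmax_{a ∈ A} [Σ_{i ∈ N} λ_i t_i^a − κ(a)]. -/
open Function

/-- A type profile: column `t a` is the utility vector in `ℝⁿ` for alternative `a`;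
agent `i`'s type (row) is `fun a => t a i`.  The domain is unrestricted: `𝕋ⁿ = ℝ^{m×n}`. -/
abbrev Profile (n : ℕ) (A : Type*) := A → Fin n → ℝ

/-- Payment rule `p` implements `f` in dominant strategies:
no agent `i` can gain by a unilateral deviation (a change of his own row only). -/
def Implements {n : ℕ} {A : Type*} (f : Profile n A → A)
    (p : Profile n A → Fin n → ℝ) : Prop :=
  ∀ t s : Profile n A, ∀ i : Fin n,
    (∀ j : Fin n, j ≠ i → ∀ a : A, s a j = t a j) →
    t (f t) i + p t i ≥ t (f s) i + p s i

/-- `f` is implementable in dominant strategies. -/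
def Implementable {n : ℕ} {A : Type*} (f : Profile n A → A) : Prop :=
  ∃ p, Implements f p

/-- The choice set `C^f(t)`: alternatives `a` such that raising the column of `a`
by any strictly positive `ε` makes `f` choose `a`. -/
def ChoiceSet {n : ℕ} {A : Type*} [DecidableEq A]
    (f : Profile n A → A) (t : Profile n A) : Set A :=
  {a | ∀ ε : Fin n → ℝ, (∀ i, 0 < ε i) →
    f (Function.update t a (t a + ε)) = a}

/-- `f` is neutral: permuting the columns of a profile permutes the choice set
accordingly (the profile `s` induced by `ρ` has `s^{ρ a} = t^a`, i.e. `s b = t (ρ⁻¹ b)`). -/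
def Neutral {n : ℕ} {A : Type*} [DecidableEq A] (f : Profile n A → A) : Prop :=
  ∀ t : Profile n A, ∀ ρ : Equiv.Perm A,
    ChoiceSet f (fun b => t (ρ.symm b)) = ρ '' ChoiceSet f t

/-- `f` satisfies non-imposition: every alternative is chosen at some profile. -/
def NonImposition {n : ℕ} {A : Type*} (f : Profile n A → A) : Prop :=
  ∀ a : A, ∃ t : Profile n A, f t = a

/-- The `P`-set of the pair `(a,b)`. -/
def RPSet {n : ℕ} {A : Type*} [DecidableEq A] (f : Profile n A → A) (a b : A) :
    Set (Fin n → ℝ) :=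
  {α | ∃ t : Profile n A, a ∈ ChoiceSet f t ∧ t a - t b = α}

/-- The profile `1^a_ε`: column `a` equals the constant vector `ε·𝟙`, all other columns are `0`. -/
def OneProf {n : ℕ} {A : Type*} [DecidableEq A] (a : A) (ε : ℝ) : Profile n A :=
  fun b => if b = a then (fun _ => ε) else 0

set_option linter.unusedSectionVars false

section Part1
variable {n : ℕ} {A : Type*} [DecidableEq A] {f : Profile n A → A}

lemma wmon {p} (hp : Implements f p) {t s : Profile n A} {i : Fin n}
    (h : ∀ j : Fin n, j ≠ i → ∀ a, s a j = t a j) :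
    s (f s) i - t (f s) i ≥ s (f t) i - t (f t) i := by
  have h1 := hp t s i h
  have h2 := hp s t i (fun j hj a => (h j hj a).symm)
  linarith

lemma pad (hf : Implementable f) (t u : Profile n A)
    (h : ∀ x, x ≠ f t → ∀ i, u x i - t x i < u (f t) i - t (f t) i) :
    f u = f t := by
  obtain ⟨p, hp⟩ := hf
  set a := f t with ha
  let v : ℕ → Profile n A := fun k x i => if (i : ℕ) < k then u x i else t x i
  have hv0 : v 0 = t := by funext x i; simp [v]
  have hvn : v n = u := by funext x i; simp [v, i.isLt]
  have key : ∀ k, k ≤ n → f (v k) = a := by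
    intro k
    induction k with
    | zero => intro _; rw [hv0]
    | succ m ih =>
      intro hm
      have hmn : m < n := hm
      have hfm := ih (le_of_lt hmn)
      by_contra hne
      have hrows : ∀ j : Fin n, j ≠ ⟨m, hmn⟩ → ∀ x, v (m+1) x j = v m x j := by
        intro j hj x
        have hjm : (j : ℕ) ≠ m := fun hh => hj (Fin.ext hh)
        simp only [v]
        by_cases hlt : (j : ℕ) < m
        · rw [if_pos (by omega), if_pos hlt]
        · rw [if_neg (by omega), if_neg hlt]
      have hw := wmon hp (t := v m) (s := v (m+1)) (i := ⟨m, hmn⟩) hrows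
      rw [hfm] at hw
      set c := f (v (m+1)) with hc
      have e1 : ∀ x, v (m+1) x ⟨m, hmn⟩ = u x ⟨m, hmn⟩ := by intro x; simp [v]
      have e2 : ∀ x, v m x ⟨m, hmn⟩ = t x ⟨m, hmn⟩ := by intro x; simp [v]
      rw [e1, e2, e1, e2] at hw
      have := h c hne ⟨m, hmn⟩
      linarith
  have := key n (le_refl n)
  rwa [hvn] at this

lemma mem_choiceSet_self (hf : Implementable f) (t : Profile n A) :
    f t ∈ ChoiceSet f t := by
  intro ε hε
  apply pad hf
  intro x hx i
  rw [Function.update_of_ne hx, Function.update_self]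
  simp [lt_of_lt_of_le (hε i) (le_refl _), hε i]

lemma diff_mem_rpset {t : Profile n A} {a : A} (ha : a ∈ ChoiceSet f t) (b : A) :
    t a - t b ∈ RPSet f a b := ⟨t, ha, rfl⟩

lemma rpset_nonempty (hf : Implementable f) (hni : NonImposition f) (a b : A) :
    ∃ μ, μ ∈ RPSet f a b := by
  obtain ⟨t, ht⟩ := hni a
  exact ⟨t a - t b, t, ht ▸ mem_choiceSet_self hf t, rfl⟩

lemma rpset_up {a b : A} (hab : a ≠ b) {α : Fin n → ℝ} (h : α ∈ RPSet f a b)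
    (δ : Fin n → ℝ) (hδ : ∀ i, 0 ≤ δ i) : α + δ ∈ RPSet f a b := by
  obtain ⟨t, ht, hd⟩ := h
  refine ⟨Function.update t a (t a + δ), ?_, ?_⟩
  · intro ε hε
    rw [Function.update_idem, Function.update_self]
    have : t a + δ + ε = t a + (δ + ε) := by ring
    rw [this]
    exact ht (δ + ε) (fun i => by have := hδ i; have := hε i; simp [Pi.add_apply]; linarith)
  · rw [Function.update_self, Function.update_of_ne (Ne.symm hab)]
    rw [← hd]; ring

/-- L1: strong witness with other columns pushed arbitrarily low. -/
lemma strong_witness (hf : Implementable f) {a b : A} (hab : a ≠ b)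
    {α : Fin n → ℝ} (h : α ∈ RPSet f a b) (ε : Fin n → ℝ) (hε : ∀ i, 0 < ε i)
    (M : ℝ) :
    ∃ w : Profile n A, f w = a ∧ (∀ i, w a i - w b i = α i + ε i) ∧
      ∀ c, c ≠ a → c ≠ b → ∀ i, w a i - w c i ≥ M := by
  obtain ⟨t, ht, hd⟩ := h
  have hd' : ∀ i, t a i - t b i = α i := fun i => by
    have := congrFun hd i; simpa using this
  set t1 := Function.update t a (t a + (fun i => ε i / 2)) with ht1
  have hft1 : f t1 = a := ht _ (fun i => by simpa using half_pos (hε i))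
  set w : Profile n A := fun x => if x = a then (fun i => t a i + ε i)
    else if x = b then t b
    else (fun i => min (t x i) (t a i + ε i - M) - 1) with hw
  have hwa : w a = fun i => t a i + ε i := by simp [hw]
  have hwb : w b = t b := by simp [hw, hab.symm]
  have hfw : f w = a := by
    rw [← hft1]
    apply pad hf
    rw [hft1]
    intro x hx i
    have hwt1a : w a i - t1 a i = ε i / 2 := by
      rw [hwa]
      simp [ht1, Function.update_self]
      ring
    rw [hwt1a]
    have ht1x : t1 x = t x := Function.update_of_ne hx _ _
    by_cases hxb : x = b
    · subst hxb
      rw [hwb, ht1x]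
      have := hε i; simp; linarith
    · have hwx : w x i = min (t x i) (t a i + ε i - M) - 1 := by
        simp [hw, hx, hxb]
      rw [hwx, ht1x]
      have h1 : min (t x i) (t a i + ε i - M) ≤ t x i := min_le_left _ _
      have := hε i
      linarith
  refine ⟨w, hfw, ?_, ?_⟩
  · intro i
    rw [hwa, hwb]
    have := hd' i
    simp; linarith
  · intro c hca hcb i
    have hwc : w c i = min (t c i) (t a i + ε i - M) - 1 := by
      simp [hw, hca, hcb]
    rw [hwa, hwc]
    have h1 : min (t c i) (t a i + ε i - M) ≤ t a i + ε i - M := min_le_right _ _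
    simp; linarith
end Part1

section Part2
variable {n : ℕ} {A : Type*} [DecidableEq A] {f : Profile n A → A}

/-- F4: no strictly-negative 2-cycle. -/
lemma no_neg_cycle2 (hf : Implementable f) {a b : A} (hab : a ≠ b)
    {α β : Fin n → ℝ} (hα : α ∈ RPSet f a b) (hβ : β ∈ RPSet f b a) :
    ¬ ∀ i, α i + β i < 0 := by
  intro hneg
  set ε : Fin n → ℝ := fun i => -(α i + β i) / 4 with hε
  have hεpos : ∀ i, 0 < ε i := fun i => by have := hneg i; simp [hε]; linarith
  obtain ⟨w1, hw1f, hw1d, hw1l⟩ := strong_witness hf hab hα ε hεpos 0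
  obtain ⟨w2, hw2f, hw2d, hw2l⟩ := strong_witness hf hab.symm hβ ε hεpos 0
  set u : Profile n A := fun x => if x = a then (fun _ => 0)
    else if x = b then (fun i => -(α i) - 2 * ε i)
    else (fun i => min (w1 x i - w1 a i) (w2 x i - w2 b i + (-(α i) - 2 * ε i)) - 1) with hu
  have hua : u a = fun _ => (0:ℝ) := by simp [hu]
  have hub : u b = fun i => -(α i) - 2 * ε i := by simp [hu, hab.symm]
  have hfa : f u = a := by
    rw [← hw1f]
    apply pad hf
    rw [hw1f]
    intro x hx i
    by_cases hxb : x = b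
    · subst hxb
      rw [hua, hub]
      have := hw1d i
      have := hεpos i
      simp; linarith
    · have hux : u x i = min (w1 x i - w1 a i) (w2 x i - w2 b i + (-(α i) - 2 * ε i)) - 1 := by
        simp [hu, hx, hxb]
      rw [hux, hua]
      have h1 : min (w1 x i - w1 a i) (w2 x i - w2 b i + (-(α i) - 2 * ε i)) ≤ w1 x i - w1 a i :=
        min_le_left _ _
      simp; linarith
  have hfb : f u = b := by
    rw [← hw2f]
    apply pad hf
    rw [hw2f]
    intro x hx i
    by_cases hxa : x = a
    · subst hxa
      rw [hua, hub]
      have := hw2d i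
      have := hεpos i
      have := hneg i
      simp; simp [hε] at *; linarith
    · have hux : u x i = min (w1 x i - w1 a i) (w2 x i - w2 b i + (-(α i) - 2 * ε i)) - 1 := by
        simp [hu, hxa, hx]
      rw [hux, hub]
      have h1 : min (w1 x i - w1 a i) (w2 x i - w2 b i + (-(α i) - 2 * ε i))
          ≤ w2 x i - w2 b i + (-(α i) - 2 * ε i) := min_le_right _ _
      simp; linarith
  exact hab (hfa ▸ hfb)

/-- F3': covering. -/
lemma rpset_cover (hf : Implementable f) (hni : NonImposition f)
    {a b : A} (hab : a ≠ b) (α : Fin n → ℝ) :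
    α ∈ RPSet f a b ∨ -α ∈ RPSet f b a := by
  obtain ⟨s, hs⟩ := hni a
  have hsC : a ∈ ChoiceSet f s := hs ▸ mem_choiceSet_self hf s
  set u : Profile n A := fun x => if x = a then α
    else if x = b then 0
    else (fun i => α i - (s a i - s x i) - 1) with hu
  have hua : u a = α := by simp [hu]
  have hub : u b = 0 := by simp [hu, hab.symm]
  have hdC : f u ∈ ChoiceSet f u := mem_choiceSet_self hf u
  by_cases hda : f u = a
  · left
    have := diff_mem_rpset (hda ▸ hdC) b
    rwa [hua, hub, sub_zero] at this
  by_cases hdb : f u = b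
  · right
    have := diff_mem_rpset (hdb ▸ hdC) a
    rw [hua, hub] at this
    simpa using this
  · exfalso
    set d := f u with hd
    have h1 : u d - u a ∈ RPSet f d a := diff_mem_rpset hdC a
    have h2 : s a - s d ∈ RPSet f a d := diff_mem_rpset hsC d
    refine no_neg_cycle2 hf hda h1 h2 (fun i => ?_)
    have hud : u d i = α i - (s a i - s d i) - 1 := by
      simp [hu, hda, hdb]
    simp [hud, hua]
    linarith
end Part2

section Part3
variable {n : ℕ} {A : Type*} [Fintype A] [DecidableEq A] {f : Profile n A → A}

/-- F5: additivity of the P-sets. -/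
lemma rpset_add (hn : 0 < n) (hf : Implementable f) (hni : NonImposition f)
    {a b c : A} (hab : a ≠ b) (hbc : b ≠ c) (hac : a ≠ c)
    {α β : Fin n → ℝ} (hα : α ∈ RPSet f a b) (hβ : β ∈ RPSet f b c)
    {ε : Fin n → ℝ} (hε : ∀ i, 0 < ε i) :
    α + β + ε ∈ RPSet f a c := by
  obtain ⟨s0, hs0⟩ := hni b
  have hs0C : b ∈ ChoiceSet f s0 := hs0 ▸ mem_choiceSet_self hf s0
  have hAne : (Finset.univ : Finset A).Nonempty := ⟨a, Finset.mem_univ a⟩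
  have hNne : (Finset.univ : Finset (Fin n)).Nonempty := ⟨⟨0, hn⟩, Finset.mem_univ _⟩
  set M : ℝ := 1 + Finset.univ.sup' hAne
      (fun x => Finset.univ.sup' hNne (fun i => s0 b i - s0 x i)) with hM
  have hMle : ∀ x : A, ∀ i, s0 b i - s0 x i ≤ M - 1 := by
    intro x i
    have h1 : s0 b i - s0 x i ≤ Finset.univ.sup' hNne (fun j => s0 b j - s0 x j) :=
      Finset.le_sup' (fun j => s0 b j - s0 x j) (Finset.mem_univ i)
    have h2 : Finset.univ.sup' hNne (fun j => s0 b j - s0 x j) ≤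
        Finset.univ.sup' hAne
          (fun y => Finset.univ.sup' hNne (fun i => s0 b i - s0 y i)) :=
      Finset.le_sup' (fun y => Finset.univ.sup' hNne (fun i => s0 b i - s0 y i)) (Finset.mem_univ x)
    rw [hM]; linarith
  obtain ⟨s1, hs1f, hs1d, hs1l⟩ := strong_witness hf hbc hβ (fun i => ε i / 2)
    (fun i => half_pos (hε i)) M
  set v : Profile n A := Function.update s1 a (fun i => s1 b i + α i + ε i / 2) with hv
  have hva : v a = fun i => s1 b i + α i + ε i / 2 := Function.update_self _ _ _
  have hvx : ∀ x, x ≠ a → v x = s1 x := fun x hx => Function.update_of_ne hx _ _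
  have hdC : f v ∈ ChoiceSet f v := mem_choiceSet_self hf v
  by_cases hda : f v = a
  · have hmem := diff_mem_rpset (hda ▸ hdC) c
    have : v a - v c = α + β + ε := by
      funext i
      rw [hva, hvx c (Ne.symm hac)]
      have := hs1d i
      simp; linarith
    rwa [this] at hmem
  exfalso
  by_cases hdb : f v = b
  · have hmem := diff_mem_rpset (hdb ▸ hdC) a
    rw [hvx b (Ne.symm hab)] at hmem
    refine no_neg_cycle2 hf hab hα hmem (fun i => ?_)
    rw [hva]
    have := hε i
    simp; linarith
  by_cases hdc : f v = c
  · have hmem := diff_mem_rpset (hdc ▸ hdC) b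
    rw [hvx c (Ne.symm hac), hvx b (Ne.symm hab)] at hmem
    refine no_neg_cycle2 hf hbc hβ hmem (fun i => ?_)
    have := hs1d i
    have := hε i
    simp; linarith
  · set d := f v with hd
    have hmem := diff_mem_rpset hdC b
    rw [hvx d hda, hvx b (Ne.symm hab)] at hmem
    have hμ : s0 b - s0 d ∈ RPSet f b d := diff_mem_rpset hs0C d
    refine no_neg_cycle2 hf hdb hmem hμ (fun i => ?_)
    have h1 : s1 b i - s1 d i ≥ M := hs1l d hdb hdc i
    have h2 : s0 b i - s0 d i ≤ M - 1 := hMle d i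
    simp; linarith
end Part3

section Part4
variable {n : ℕ} {A : Type*} [Fintype A] [DecidableEq A]

def gset (f : Profile n A → A) (a b : A) (α : Fin n → ℝ) : Set ℝ :=
  {x : ℝ | (fun i => α i + x) ∈ RPSet f a b}

noncomputable def gfun (f : Profile n A → A) (a b : A) (α : Fin n → ℝ) : ℝ :=
  sInf (gset f a b α)

variable {f : Profile n A → A}

lemma gset_up {a b : A} (hab : a ≠ b) {α : Fin n → ℝ} {x y : ℝ}
    (h : x ∈ gset f a b α) (hxy : x ≤ y) : y ∈ gset f a b α := by
  have := rpset_up hab h (fun _ => y - x) (fun _ => by show (0:ℝ) <= y - x; linarith)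
  have e : (fun i => α i + x) + (fun _ => y - x) = fun i => α i + y := by
    funext i; simp; try ring
  rwa [e] at this

lemma gset_nonempty (hn : 0 < n) (hf : Implementable f) (hni : NonImposition f)
    {a b : A} (hab : a ≠ b) (α : Fin n → ℝ) : (gset f a b α).Nonempty := by
  obtain ⟨μ, hμ⟩ := rpset_nonempty hf hni a b
  have hNne : (Finset.univ : Finset (Fin n)).Nonempty := ⟨⟨0, hn⟩, Finset.mem_univ _⟩
  refine ⟨Finset.univ.sup' hNne (fun i => μ i - α i), ?_⟩
  set x := Finset.univ.sup' hNne (fun i => μ i - α i) with hx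
  have hδ : ∀ i, 0 ≤ (fun i => α i + x - μ i) i := by
    intro i
    have h1 : μ i - α i ≤ x := Finset.le_sup' (fun i => μ i - α i) (Finset.mem_univ i)
    show (0:ℝ) <= α i + x - μ i
    linarith
  have := rpset_up hab hμ (fun i => α i + x - μ i) hδ
  have e : μ + (fun i => α i + x - μ i) = fun i => α i + x := by
    funext i; simp; try ring
  rwa [e] at this

lemma gset_bddBelow (hn : 0 < n) (hf : Implementable f) (hni : NonImposition f)
    {a b : A} (hab : a ≠ b) (α : Fin n → ℝ) : BddBelow (gset f a b α) := by
  obtain ⟨ν, hν⟩ := rpset_nonempty hf hni b a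
  have hNne : (Finset.univ : Finset (Fin n)).Nonempty := ⟨⟨0, hn⟩, Finset.mem_univ _⟩
  set L := -Finset.univ.sup' hNne (fun i => α i + ν i) with hL
  refine ⟨L, fun x hx => ?_⟩
  by_contra hcon
  push_neg at hcon
  refine no_neg_cycle2 hf hab hx hν (fun i => ?_)
  have h1 : α i + ν i ≤ Finset.univ.sup' hNne (fun i => α i + ν i) :=
    Finset.le_sup' (fun i => α i + ν i) (Finset.mem_univ i)
  show (α i + x) + ν i < 0
  rw [hL] at hcon
  linarith

lemma gfun_le {a b : A} (hn : 0 < n) (hf : Implementable f) (hni : NonImposition f)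
    (hab : a ≠ b) {α : Fin n → ℝ} {x : ℝ} (h : x ∈ gset f a b α) :
    gfun f a b α ≤ x :=
  csInf_le (gset_bddBelow hn hf hni hab α) h

lemma mem_of_gfun_lt {a b : A} (hn : 0 < n) (hf : Implementable f) (hni : NonImposition f)
    (hab : a ≠ b) {α : Fin n → ℝ} {x : ℝ} (h : gfun f a b α < x) :
    x ∈ gset f a b α := by
  obtain ⟨y, hy, hyx⟩ := exists_lt_of_csInf_lt (gset_nonempty hn hf hni hab α) h
  exact gset_up hab hy (le_of_lt hyx)

lemma le_gfun {a b : A} (hn : 0 < n) (hf : Implementable f) (hni : NonImposition f)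
    (hab : a ≠ b) {α : Fin n → ℝ} {L : ℝ} (h : ∀ x ∈ gset f a b α, L ≤ x) :
    L ≤ gfun f a b α :=
  le_csInf (gset_nonempty hn hf hni hab α) h

lemma gfun_mono (hn : 0 < n) (hf : Implementable f) (hni : NonImposition f)
    {a b : A} (hab : a ≠ b) {α β : Fin n → ℝ} (h : ∀ i, α i ≤ β i) :
    gfun f a b β ≤ gfun f a b α := by
  apply le_gfun hn hf hni hab
  intro x hx
  apply gfun_le hn hf hni hab
  have := rpset_up hab hx (fun i => β i - α i)
    (fun i => by show (0:ℝ) <= β i - α i; have := h i; linarith)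
  have e : (fun i => α i + x) + (fun i => β i - α i) = fun i => β i + x := by
    funext i; simp; ring
  rwa [e] at this

lemma gfun_diag (hn : 0 < n) (hf : Implementable f) (hni : NonImposition f)
    {a b : A} (hab : a ≠ b) (α : Fin n → ℝ) (c : ℝ) :
    gfun f a b (fun i => α i + c) = gfun f a b α - c := by
  apply le_antisymm
  · have h : ∀ x ∈ gset f a b α, gfun f a b (fun i => α i + c) ≤ x - c := by
      intro x hx
      apply gfun_le hn hf hni hab
      show (fun i => (α i + c) + (x - c)) ∈ RPSet f a b
      have e : (fun i => (α i + c) + (x - c)) = fun i => α i + x := by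
        funext i; ring
      rwa [e]
    have : gfun f a b (fun i => α i + c) + c ≤ gfun f a b α :=
      le_gfun hn hf hni hab (fun x hx => by have := h x hx; linarith)
    linarith
  · have h : ∀ x ∈ gset f a b (fun i => α i + c), gfun f a b α - c ≤ x := by
      intro x hx
      have hx' : (c + x) ∈ gset f a b α := by
        show (fun i => α i + (c + x)) ∈ RPSet f a b
        have e : (fun i => α i + (c + x)) = fun i => (α i + c) + x := by
          funext i; ring
        rwa [e]
      have := gfun_le hn hf hni hab hx'
      linarith
    exact le_gfun hn hf hni hab h

/-- R1: exact antisymmetry. -/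
lemma gfun_antisymm (hn : 0 < n) (hf : Implementable f) (hni : NonImposition f)
    {a b : A} (hab : a ≠ b) (α : Fin n → ℝ) :
    gfun f a b α + gfun f b a (-α) = 0 := by
  apply le_antisymm
  · by_contra hcon
    push_neg at hcon
    set g1 := gfun f a b α
    set g2 := gfun f b a (-α)
    set x := (g1 - g2) / 2 with hxdef
    have hx1 : x < g1 := by rw [hxdef]; linarith
    have hx2 : -g2 < x := by rw [hxdef]; linarith
    have hnotmem : x ∉ gset f a b α :=
      notMem_of_lt_csInf hx1 (gset_bddBelow hn hf hni hab α)
    rcases rpset_cover hf hni hab (fun i => α i + x) with hmem | hmem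
    · exact hnotmem hmem
    · have : -x ∈ gset f b a (-α) := by
        show (fun i => (-α) i + (-x)) ∈ RPSet f b a
        have e : (fun i => (-α) i + (-x)) = -(fun i => α i + x) := by
          funext i; simp; ring
        rwa [e]
      have := gfun_le hn hf hni hab.symm this
      linarith
  · by_contra hcon
    push_neg at hcon
    set g1 := gfun f a b α
    set g2 := gfun f b a (-α)
    set η := -(g1 + g2) / 2 with hη
    have hηpos : 0 < η := by rw [hη]; linarith
    obtain ⟨x, hx, hxlt⟩ := exists_lt_of_csInf_lt (gset_nonempty hn hf hni hab α)
      (show gfun f a b α < g1 + η by linarith)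
    obtain ⟨y, hy, hylt⟩ := exists_lt_of_csInf_lt (gset_nonempty hn hf hni hab.symm (-α))
      (show gfun f b a (-α) < g2 + η by linarith)
    refine no_neg_cycle2 hf hab hx hy (fun i => ?_)
    show (α i + x) + ((-α) i + y) < 0
    simp only [Pi.neg_apply]
    linarith

/-- R2: subadditivity. -/
lemma gfun_subadd (hn : 0 < n) (hf : Implementable f) (hni : NonImposition f)
    {a b c : A} (hab : a ≠ b) (hbc : b ≠ c) (hac : a ≠ c) (α β : Fin n → ℝ) :
    gfun f a c (α + β) ≤ gfun f a b α + gfun f b c β := by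
  apply le_of_forall_pos_le_add
  intro ε hε
  set η := ε / 3 with hηdef
  have hηpos : 0 < η := by rw [hηdef]; linarith
  obtain ⟨x, hx, hxlt⟩ := exists_lt_of_csInf_lt (gset_nonempty hn hf hni hab α)
    (show gfun f a b α < gfun f a b α + η by linarith)
  obtain ⟨y, hy, hylt⟩ := exists_lt_of_csInf_lt (gset_nonempty hn hf hni hbc β)
    (show gfun f b c β < gfun f b c β + η by linarith)
  have hadd := rpset_add hn hf hni hab hbc hac hx hy (ε := fun _ => η) (fun _ => hηpos)
  have e : (fun i => α i + x) + (fun i => β i + y) + (fun _ => η)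
      = fun i => (α + β) i + (x + y + η) := by
    funext i; simp; ring
  rw [e] at hadd
  have := gfun_le hn hf hni hac hadd
  linarith

/-- R3: superadditivity. -/
lemma gfun_superadd (hn : 0 < n) (hf : Implementable f) (hni : NonImposition f)
    {a b c : A} (hab : a ≠ b) (hbc : b ≠ c) (hac : a ≠ c) (α β : Fin n → ℝ) :
    gfun f b c α + gfun f a b β ≤ gfun f a c (α + β) := by
  have h1 := gfun_subadd hn hf hni (Ne.symm hbc) (Ne.symm hab) (Ne.symm hac) (-α) (-β)
  have h2 := gfun_antisymm hn hf hni hac (α + β)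
  have h3 := gfun_antisymm hn hf hni hbc α
  have h4 := gfun_antisymm hn hf hni hab β
  have e : -α + -β = -(α + β) := by funext i; simp; ring
  rw [e] at h1
  linarith
end Part4

section Part5

/-- Additive and monotone real functions are linear. -/
lemma additive_monotone_linear (ψ : ℝ → ℝ) (hadd : ∀ x y, ψ (x + y) = ψ x + ψ y)
    (hmono : Monotone ψ) : ∀ x, ψ x = x * ψ 1 := by
  have hq : ∀ q : ℚ, ∀ x : ℝ, ψ ((q : ℝ) * x) = (q : ℝ) * ψ x := by
    intro q x
    have := map_rat_smul (AddMonoidHom.mk' ψ hadd) q x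
    simpa [Rat.smul_def] using this
  have hψ0 : ψ 0 = 0 := by
    have := hadd 0 0
    simp at this
    linarith
  have hψ1 : 0 ≤ ψ 1 := by
    have := hmono (show (0:ℝ) ≤ 1 by norm_num)
    rwa [hψ0] at this
  intro x
  rcases eq_or_lt_of_le hψ1 with h0 | hpos
  · -- ψ 1 = 0 : then ψ bounded between rational multiples of 0
    have hall : ∀ q : ℚ, ψ (q : ℝ) = 0 := by
      intro q
      have := hq q 1
      rw [mul_one, ← h0] at this
      simp [this, ← h0]
    have h1 : ψ x ≤ 0 := by
      obtain ⟨q, hq1, _⟩ := exists_rat_btwn (show x < x + 1 by linarith)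
      have := hmono (le_of_lt hq1)
      rw [hall q] at this
      linarith
    have h2 : 0 ≤ ψ x := by
      obtain ⟨q, _, hq2⟩ := exists_rat_btwn (show x - 1 < x by linarith)
      have := hmono (le_of_lt hq2)
      rw [hall q] at this
      linarith
    rw [← h0]
    linarith
  · apply le_antisymm
    · by_contra hcon
      push_neg at hcon
      have hx : x < ψ x / ψ 1 := by
        rw [lt_div_iff₀ hpos]
        linarith
      obtain ⟨q, hq1, hq2⟩ := exists_rat_btwn hx
      have hm := hmono (le_of_lt hq1)
      have : ψ (q : ℝ) = (q : ℝ) * ψ 1 := by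
        have := hq q 1
        rwa [mul_one] at this
      rw [this] at hm
      have := (lt_div_iff₀ hpos).mp hq2
      linarith
    · by_contra hcon
      push_neg at hcon
      have hx : ψ x / ψ 1 < x := by
        rw [div_lt_iff₀ hpos]
        linarith
      obtain ⟨q, hq1, hq2⟩ := exists_rat_btwn hx
      have hm := hmono (le_of_lt hq2)
      have : ψ (q : ℝ) = (q : ℝ) * ψ 1 := by
        have := hq q 1
        rwa [mul_one] at this
      rw [this] at hm
      have := (div_lt_iff₀ hpos).mp hq1
      linarith

variable {n : ℕ} {A : Type*} [Fintype A] [DecidableEq A] {f : Profile n A → A}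

/-- T1 transport. -/
lemma gfun_T1 (hn : 0 < n) (hf : Implementable f) (hni : NonImposition f)
    {a b c : A} (hab : a ≠ b) (hbc : b ≠ c) (hac : a ≠ c) (α : Fin n → ℝ) :
    gfun f a c α = gfun f a b α + gfun f b c 0 := by
  apply le_antisymm
  · have := gfun_subadd hn hf hni hab hbc hac α 0
    rwa [add_zero] at this
  · have := gfun_superadd hn hf hni hab hbc hac 0 α
    rw [zero_add] at this
    linarith

/-- T2 transport. -/
lemma gfun_T2 (hn : 0 < n) (hf : Implementable f) (hni : NonImposition f)
    {a b c : A} (hab : a ≠ b) (hbc : b ≠ c) (hac : a ≠ c) (α : Fin n → ℝ) :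
    gfun f a c α = gfun f b c α + gfun f a b 0 := by
  apply le_antisymm
  · have := gfun_subadd hn hf hni hab hbc hac 0 α
    rw [zero_add] at this
    linarith
  · exact gfun_superadd hn hf hni hab hbc hac α 0 |>.trans_eq (by rw [add_zero])

/-- Normalized g. -/
noncomputable def Ghat (f : Profile n A → A) (a b : A) (α : Fin n → ℝ) : ℝ :=
  gfun f a b α - gfun f a b 0

lemma ghat_E1 (hn : 0 < n) (hf : Implementable f) (hni : NonImposition f)
    {a b c : A} (hab : a ≠ b) (hbc : b ≠ c) (hac : a ≠ c) (α : Fin n → ℝ) :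
    Ghat f a b α = Ghat f a c α := by
  have h1 := gfun_T1 hn hf hni hab hbc hac α
  have h2 := gfun_T1 hn hf hni hab hbc hac 0
  unfold Ghat
  linarith

lemma ghat_E2 (hn : 0 < n) (hf : Implementable f) (hni : NonImposition f)
    {a b c : A} (hab : a ≠ b) (hbc : b ≠ c) (hac : a ≠ c) (α : Fin n → ℝ) :
    Ghat f a c α = Ghat f b c α := by
  have h1 := gfun_T2 hn hf hni hab hbc hac α
  have h2 := gfun_T2 hn hf hni hab hbc hac 0
  unfold Ghat
  linarith

lemma exists_third (hA : 3 ≤ Fintype.card A) (a b : A) : ∃ c : A, c ≠ a ∧ c ≠ b := by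
  by_contra hcon
  push_neg at hcon
  have hsub : (Finset.univ : Finset A) ⊆ {a, b} := by
    intro c _
    rcases eq_or_ne c a with h | h
    · simp [h]
    · simp [hcon c h]
  have := Finset.card_le_card hsub
  have h2 : ({a, b} : Finset A).card ≤ 2 := Finset.card_insert_le a {b} |>.trans (by simp)
  rw [Finset.card_univ] at this
  omega

lemma ghat_E3 (hn : 0 < n) (hf : Implementable f) (hni : NonImposition f)
    (hA : 3 ≤ Fintype.card A) {a b : A} (hab : a ≠ b) (α : Fin n → ℝ) :
    Ghat f a b α = Ghat f b a α := by
  obtain ⟨c, hca, hcb⟩ := exists_third hA a b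
  have h1 := ghat_E1 hn hf hni hab (Ne.symm hcb) (Ne.symm hca) α  -- Ghat a b = Ghat a c
  have h2 := ghat_E2 hn hf hni hab (Ne.symm hcb) (Ne.symm hca) α  -- Ghat a c = Ghat b c
  have h3 := ghat_E1 hn hf hni (Ne.symm hcb) hca (Ne.symm hab) α  -- Ghat b c = Ghat b a
  linarith

/-- Master transport: all normalized g's coincide. -/
lemma ghat_master (hn : 0 < n) (hf : Implementable f) (hni : NonImposition f)
    (hA : 3 ≤ Fintype.card A) {a b c d : A} (hab : a ≠ b) (hcd : c ≠ d) (α : Fin n → ℝ) :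
    Ghat f a b α = Ghat f c d α := by
  by_cases hac : a = c
  · subst hac
    by_cases hbd : b = d
    · subst hbd; rfl
    · exact ghat_E1 hn hf hni hab hbd hcd α
  · by_cases had : a = d
    · subst had
      -- target Ghat a b = Ghat c a
      have h1 : Ghat f c a α = Ghat f a c α := ghat_E3 hn hf hni hA hcd α
      by_cases hbc : b = c
      · subst hbc; rw [h1]
      · have h2 := ghat_E1 hn hf hni hab hbc (fun h => hac h) α
        rw [h2, h1]
    · -- a ∉ {c, d}
      have h1 : Ghat f c d α = Ghat f a d α :=
        ghat_E2 hn hf hni (fun h => hac h.symm) had hcd α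
      by_cases hbd : b = d
      · subst hbd; rw [h1]
      · have h2 := ghat_E1 hn hf hni hab hbd had α
        rw [h2, h1]

end Part5


/-- Roberts' Affine Maximizer Theorem: an implementable social
choice function on `𝕋ⁿ = ℝ^{m×n}` satisfying non-imposition is an affine maximizer:
for some non-zero non-negative weights `lam` and some `κ : A → ℝ`,
`f t` maximizes `∑ i, lam i * t a i - κ a` over `a`. -/
theorem roberts_affine_maximizer
    {n : ℕ} {A : Type*} [Fintype A] [DecidableEq A]
    (hn : 0 < n) (hA : 3 ≤ Fintype.card A)
    (f : Profile n A → A)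
    (hf : Implementable f) (hni : NonImposition f) :
    ∃ lam : Fin n → ℝ, ∃ κ : A → ℝ, (∀ i, 0 ≤ lam i) ∧ lam ≠ 0 ∧
      ∀ t : Profile n A, ∀ b : A,
        (∑ i, lam i * t b i) - κ b ≤ (∑ i, lam i * t (f t) i) - κ (f t) := by
  obtain ⟨a0, b0, h01⟩ := Fintype.exists_pair_of_one_lt_card (α := A) (by omega)
  obtain ⟨c0, hc0a, hc0b⟩ := exists_third hA a0 b0
  have h12 : b0 ≠ c0 := Ne.symm hc0b
  have h02 : a0 ≠ c0 := Ne.symm hc0a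
  set G : (Fin n → ℝ) → ℝ := Ghat f a0 b0 with hG
  -- additivity of G
  have hadd : ∀ α β, G (α + β) = G α + G β := by
    intro α β
    have h1 := gfun_subadd hn hf hni h01 h12 h02 α β
    have h2 := gfun_superadd hn hf hni h01 h12 h02 α β
    have e1 : ∀ γ, gfun f a0 c0 γ = G γ + gfun f a0 c0 0 := by
      intro γ
      have hm := ghat_master hn hf hni hA h01 h02 γ
      rw [hG]
      unfold Ghat at hm ⊢
      linarith
    have e2 : ∀ γ, gfun f b0 c0 γ = G γ + gfun f b0 c0 0 := by
      intro γ
      have hm := ghat_master hn hf hni hA h01 h12 γ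
      rw [hG]
      unfold Ghat at hm ⊢
      linarith
    have e3 : ∀ γ, gfun f a0 b0 γ = G γ + gfun f a0 b0 0 := by
      intro γ
      rw [hG]
      unfold Ghat
      ring
    have hT := gfun_T1 hn hf hni h01 h12 h02 0
    linarith [e1 (α + β), e2 α, e2 β, e3 α, e3 β, hT, h1, h2]
  have hmonoG : ∀ α β : Fin n → ℝ, (∀ i, α i ≤ β i) → G β ≤ G α := by
    intro α β h
    have := gfun_mono hn hf hni h01 h
    rw [hG]; unfold Ghat
    linarith
  have hG0 : G 0 = 0 := by rw [hG]; unfold Ghat; ring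
  have hdiagG : ∀ c : ℝ, G (fun _ => c) = -c := by
    intro c
    have := gfun_diag hn hf hni h01 0 c
    have e : (fun i => (0 : Fin n → ℝ) i + c) = (fun _ : Fin n => c) := by
      funext i; simp
    rw [e] at this
    rw [hG]; unfold Ghat
    rw [this]; ring
  -- coordinates
  set lam : Fin n → ℝ := fun i => -G (Pi.single i 1) with hlam
  have hψ : ∀ i : Fin n, ∀ x : ℝ, G (Pi.single i x) = -(x * lam i) := by
    intro i
    have hψadd : ∀ x y : ℝ, (fun x => -G (Pi.single i x)) (x + y)
        = (fun x => -G (Pi.single i x)) x + (fun x => -G (Pi.single i x)) y := by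
      intro x y
      have : (Pi.single i (x + y) : Fin n → ℝ) = Pi.single i x + Pi.single i y := by
        rw [Pi.single_add]
      simp only [this, hadd]
      ring
    have hψmono : Monotone (fun x => -G (Pi.single i x)) := by
      intro x y hxy
      have hpt : ∀ j, (Pi.single i x : Fin n → ℝ) j ≤ (Pi.single i y : Fin n → ℝ) j := by
        intro j
        rcases eq_or_ne j i with h | h
        · subst h; simp [Pi.single_apply, hxy]
        · simp [Pi.single_apply, h]
      have := hmonoG _ _ hpt
      simp only
      linarith
    have hlin := additive_monotone_linear _ hψadd hψmono
    intro x
    have := hlin x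
    rw [hlam]
    simp only
    linarith
  -- sum decomposition
  have hGsum : ∀ α : Fin n → ℝ, G α = ∑ i, -(α i * lam i) := by
    intro α
    have hdecomp : α = ∑ i, Pi.single i (α i) := (Finset.univ_sum_single α).symm
    have hmap : G (∑ i, Pi.single i (α i)) = ∑ i, G (Pi.single i (α i)) :=
      map_sum (AddMonoidHom.mk' G hadd) (fun i => Pi.single i (α i)) Finset.univ
    calc G α = G (∑ i, Pi.single i (α i)) := by rw [← hdecomp]
    _ = ∑ i, G (Pi.single i (α i)) := hmap
    _ = ∑ i, -(α i * lam i) := Finset.sum_congr rfl (fun i _ => hψ i (α i))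
  have hlamnn : ∀ i, 0 ≤ lam i := by
    intro i
    have h1 := hψ i 1
    have h0 := hψ i 0
    have hpt : ∀ j, (Pi.single i (0:ℝ) : Fin n → ℝ) j ≤ (Pi.single i (1:ℝ) : Fin n → ℝ) j := by
      intro j
      rcases eq_or_ne j i with h | h
      · subst h; simp [Pi.single_apply]
      · simp [Pi.single_apply, h]
    have := hmonoG _ _ hpt
    rw [h1, h0] at this
    linarith
  have hlamsum : ∑ i, lam i = 1 := by
    have h1 : (fun _ : Fin n => (1:ℝ)) = ∑ i, Pi.single i (1:ℝ) := by
      have := Finset.univ_sum_single (fun _ : Fin n => (1:ℝ))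
      exact this.symm
    have h2 : G (fun _ : Fin n => (1:ℝ)) = -1 := hdiagG 1
    rw [h1] at h2
    have hmap : G (∑ i, Pi.single i (1:ℝ)) = ∑ i, G (Pi.single i (1:ℝ)) :=
      map_sum (AddMonoidHom.mk' G hadd) (fun i => Pi.single i (1:ℝ)) Finset.univ
    rw [hmap] at h2
    have h3 : ∑ i, G (Pi.single i (1:ℝ)) = ∑ i, -(lam i) :=
      Finset.sum_congr rfl (fun i _ => by have := hψ i 1; rw [this]; ring)
    rw [h3, Finset.sum_neg_distrib] at h2
    linarith
  have hlamne : lam ≠ 0 := by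
    intro h
    rw [h] at hlamsum
    simp at hlamsum
  -- the offsets
  set κ : A → ℝ := fun a => if a = a0 then 0 else gfun f a a0 0 with hκ
  have hγ : ∀ a b : A, a ≠ b → gfun f a b 0 = κ a - κ b := by
    intro a b hab
    by_cases hb : b = a0
    · subst hb
      rw [hκ]
      simp [hab]
    · by_cases ha : a = a0
      · subst ha
        have hanti := gfun_antisymm hn hf hni hab 0
        rw [hκ]
        simp [hb]
        have : -(0 : Fin n → ℝ) = 0 := by funext i; simp
        rw [this] at hanti
        linarith
      · have hT := gfun_T1 hn hf hni ha (fun h => hb h.symm) hab 0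
        have hanti := gfun_antisymm hn hf hni (Ne.symm hb) 0
        have : -(0 : Fin n → ℝ) = 0 := by funext i; simp
        rw [this] at hanti
        rw [hκ]
        simp [ha, hb]
        linarith
  refine ⟨lam, κ, hlamnn, hlamne, ?_⟩
  intro t b
  by_cases hbd : b = f t
  · rw [hbd]
  · set d := f t with hd0
    have hdb : d ≠ b := fun h => hbd h.symm
    have hdC : d ∈ ChoiceSet f t := mem_choiceSet_self hf t
    have hmem : t d - t b ∈ RPSet f d b := diff_mem_rpset hdC b
    have h0mem : (0:ℝ) ∈ gset f d b (t d - t b) := by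
      show (fun i => (t d - t b) i + 0) ∈ RPSet f d b
      have e : (fun i => (t d - t b) i + 0) = t d - t b := by funext i; simp
      rwa [e]
    have hle : gfun f d b (t d - t b) ≤ 0 := gfun_le hn hf hni hdb h0mem
    have hmaster := ghat_master hn hf hni hA hdb h01 (t d - t b)
    unfold Ghat at hmaster
    have hγdb := hγ d b hdb
    have hGval := hGsum (t d - t b)
    rw [hG] at hGval
    unfold Ghat at hGval
    -- gfun f d b (t d - t b) = G (t d - t b) + κ d - κ b ≤ 0
    have hkey : (∑ i, -((t d - t b) i * lam i)) + (κ d - κ b) ≤ 0 := by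
      linarith
    have hsum : ∑ i, -((t d - t b) i * lam i)
        = ∑ i, (lam i * t b i - lam i * t d i) :=
      Finset.sum_congr rfl (fun i _ => by
        have : (t d - t b) i = t d i - t b i := rfl
        rw [this]; ring)
    rw [hsum, Finset.sum_sub_distrib] at hkey
    linarith
end

section
/- Suppose 𝕋ⁿ = [0, H)^{m×n}, where H ∈ ℝ ∪ {+∞} and H > 0 (each agent's type space is [0,H)^m). If f is an implementable, neutral, and anonymous social choice function, then f is the efficient social choice function: for every type profile t ∈ 𝕋ⁿ, f(t) ∈ argmax_{a ∈ A} Σ_{i ∈ N} t_i^a. -/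
open Function

/-- Payment rule `p` implements `f` in dominant strategies on the domain `Dom`:
no agent `i` can gain by a unilateral deviation (a change of his own row only). -/
def ImplementsOn {n : ℕ} {A : Type*} (Dom : Set (Profile n A)) (f : Profile n A → A)
    (p : Profile n A → Fin n → ℝ) : Prop :=
  ∀ t ∈ Dom, ∀ s ∈ Dom, ∀ i : Fin n,
    (∀ j : Fin n, j ≠ i → ∀ a : A, s a j = t a j) →
    t (f t) i + p t i ≥ t (f s) i + p s i

/-- `f` is implementable in dominant strategies on `Dom`. -/
def ImplementableOn {n : ℕ} {A : Type*} (Dom : Set (Profile n A))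
    (f : Profile n A → A) : Prop :=
  ∃ p, ImplementsOn Dom f p

/-- The choice set `C^f(t)`: alternatives `a` such that raising the column of `a`
by any strictly positive `ε` (staying inside the domain) makes `f` choose `a`. -/
def ChoiceSetOn {n : ℕ} {A : Type*} [DecidableEq A] (Dom : Set (Profile n A))
    (f : Profile n A → A) (t : Profile n A) : Set A :=
  {a | ∀ ε : Fin n → ℝ, (∀ i, 0 < ε i) →
    Function.update t a (t a + ε) ∈ Dom →
    f (Function.update t a (t a + ε)) = a}

/-- `f` is neutral: permuting the columns of a profile permutes the choice set
accordingly (the profile `s` induced by `ρ` has `s^{ρ a} = t^a`, i.e. `s b = t (ρ⁻¹ b)`). -/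
def NeutralOn {n : ℕ} {A : Type*} [DecidableEq A] (Dom : Set (Profile n A))
    (f : Profile n A → A) : Prop :=
  ∀ t ∈ Dom, ∀ ρ : Equiv.Perm A,
    ChoiceSetOn Dom f (fun b => t (ρ.symm b)) = ρ '' ChoiceSetOn Dom f t

/-- The `m`-dimensional open interval domain: agent `i`'s values all lie in the
open interval `(α i, β i)` (endpoints possibly infinite). -/
def IntervalDom (n : ℕ) (A : Type*) (α β : Fin n → EReal) : Set (Profile n A) :=
  {t | ∀ (a : A) (i : Fin n), α i < (t a i : EReal) ∧ (t a i : EReal) < β i}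

/-- The set `𝔻` of feasible utility vectors. -/
def DSet {n : ℕ} (α β : Fin n → EReal) : Set (Fin n → ℝ) :=
  {x | ∀ i : Fin n, α i < (x i : EReal) ∧ (x i : EReal) < β i}

/-- The strict relation `P^f` induced by `f` on utility vectors. -/
def PRel {n : ℕ} {A : Type*} [DecidableEq A] (Dom : Set (Profile n A))
    (f : Profile n A → A) (x y : Fin n → ℝ) : Prop :=
  ∃ t ∈ Dom, ∃ a b : A, a ≠ b ∧ t a = x ∧ t b = y ∧
    a ∈ ChoiceSetOn Dom f t ∧ b ∉ ChoiceSetOn Dom f t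

/-- The indifference relation `I^f` induced by `f` on utility vectors. -/
def IRel {n : ℕ} {A : Type*} [DecidableEq A] (Dom : Set (Profile n A))
    (f : Profile n A → A) (x y : Fin n → ℝ) : Prop :=
  ∃ t ∈ Dom, ∃ a b : A, a ≠ b ∧ t a = x ∧ t b = y ∧
    a ∈ ChoiceSetOn Dom f t ∧ b ∈ ChoiceSetOn Dom f t

/-- The induced social welfare relation `R^f`. -/
def RRel {n : ℕ} {A : Type*} [DecidableEq A] (Dom : Set (Profile n A))
    (f : Profile n A → A) (x y : Fin n → ℝ) : Prop :=
  PRel Dom f x y ∨ IRel Dom f x y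

/-- The half-open domain `[0, H)^{m×n}` (with `H` possibly `+∞`). -/
def HalfOpenDom (n : ℕ) (A : Type*) (H : EReal) : Set (Profile n A) :=
  {t | ∀ (a : A) (i : Fin n), 0 ≤ t a i ∧ (t a i : EReal) < H}

/-- `f` is anonymous on `Dom`: permuting the agents (rows) does not change the outcome. -/
def AnonymousOn {n : ℕ} {A : Type*} (Dom : Set (Profile n A))
    (f : Profile n A → A) : Prop :=
  ∀ t ∈ Dom, ∀ σ : Equiv.Perm (Fin n), f (fun a i => t a (σ i)) = f t

namespace Roberts
set_option maxHeartbeats 1000000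
set_option linter.unusedSectionVars false
set_option linter.unusedVariables false

variable {n : ℕ} {A : Type*} [Fintype A] [DecidableEq A] {H : EReal}
variable {f : Profile n A → A} {pp : Profile n A → Fin n → ℝ}

/-- feasible utility vectors -/
def DD (n : ℕ) (H : EReal) (v : Fin n → ℝ) : Prop := ∀ i, 0 ≤ v i ∧ (v i : EReal) < H

lemma roomLemma (hn : 0 < n) (hH : (0:EReal) < H) (v : Fin n → ℝ)
    (hv : ∀ i, (v i : EReal) < H) :
    ∃ θ : ℝ, 0 < θ ∧ ∀ i, ((v i + θ : ℝ) : EReal) < H := by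
  by_cases hT : H = ⊤
  · exact ⟨1, one_pos, fun i => by rw [hT]; exact EReal.coe_lt_top _⟩
  · have hB : H ≠ ⊥ := by rintro rfl; simp at hH
    set r : ℝ := H.toReal with hr
    have hrH : (r : EReal) = H := EReal.coe_toReal hT hB
    have hv' : ∀ i, v i < r := fun i => by
      have := hv i; rw [← hrH] at this; exact_mod_cast this
    have hne : (Finset.univ : Finset (Fin n)).Nonempty := ⟨⟨0, hn⟩, Finset.mem_univ _⟩
    refine ⟨Finset.univ.inf' hne (fun i => (r - v i) / 2), ?_, ?_⟩
    · rw [Finset.lt_inf'_iff]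
      intro i _
      have := hv' i; linarith
    · intro i
      have h1 : Finset.univ.inf' hne (fun j => (r - v j) / 2) ≤ (r - v i)/2 :=
        Finset.inf'_le _ (Finset.mem_univ i)
      have h2 := hv' i
      rw [← hrH]
      exact_mod_cast (by linarith : v i + Finset.univ.inf' hne (fun j => (r - v j)/2) < r)

/-- one-agent monotonicity step -/
lemma step_one (hp : ImplementsOn (HalfOpenDom n A H) f pp)
    {t s : Profile n A} (ht : t ∈ HalfOpenDom n A H) (hs : s ∈ HalfOpenDom n A H) (i : Fin n)
    (hrow : ∀ j : Fin n, j ≠ i → ∀ c : A, s c j = t c j)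
    (hgap : ∀ c : A, c ≠ f t → s c i - t c i < s (f t) i - t (f t) i) : f s = f t := by
  by_contra hne
  have h1 := hp t ht s hs i hrow
  have h2 := hp s hs t ht i (fun j hj c => (hrow j hj c).symm)
  have h3 := hgap (f s) hne
  linarith

/-- multi-agent positive-association -/
lemma pad (hp : ImplementsOn (HalfOpenDom n A H) f pp)
    {t s : Profile n A} (ht : t ∈ HalfOpenDom n A H) (hs : s ∈ HalfOpenDom n A H) {a : A}
    (hft : f t = a)
    (hgap : ∀ i : Fin n, ∀ c : A, c ≠ a → s c i - t c i < s a i - t a i) : f s = a := by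
  classical
  set hyb : ℕ → Profile n A := fun k c i => if (i : ℕ) < k then s c i else t c i with hhyb
  have hmem : ∀ k, hyb k ∈ HalfOpenDom n A H := by
    intro k c i
    simp only [hyb]
    split_ifs
    · exact hs c i
    · exact ht c i
  have key : ∀ k, k ≤ n → f (hyb k) = a := by
    intro k
    induction k with
    | zero =>
        intro _
        have h0 : hyb 0 = t := by funext c i; simp [hyb]
        rw [h0, hft]
    | succ k ih =>
        intro hk
        have hk' : k < n := hk
        have ihk := ih (le_of_lt hk')
        set i0 : Fin n := ⟨k, hk'⟩ with hi0
        have hrow : ∀ j : Fin n, j ≠ i0 → ∀ c : A, hyb (k+1) c j = hyb k c j := by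
          intro j hj c
          have hjk : (j : ℕ) ≠ k := by
            intro h; exact hj (Fin.ext h)
          simp only [hyb]
          by_cases h : (j:ℕ) < k
          · rw [if_pos h, if_pos (by omega)]
          · rw [if_neg h, if_neg (by omega)]
        have hgap' : ∀ c : A, c ≠ f (hyb k) →
            hyb (k+1) c i0 - hyb k c i0 < hyb (k+1) (f (hyb k)) i0 - hyb k (f (hyb k)) i0 := by
          rw [ihk]
          intro c hc
          simp only [hyb, hi0]
          simp only [Nat.lt_succ_self, lt_irrefl, if_true, if_false, Nat.lt_irrefl]
          exact hgap i0 c hc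
        have := step_one hp (hmem k) (hmem (k+1)) i0 hrow hgap'
        rw [this, ihk]
  have hn' : hyb n = s := by
    funext c i; simp [hyb, i.isLt]
  have := key n (le_refl n)
  rwa [hn'] at this

/-- `f t` is in the choice set. -/
lemma f_mem (hp : ImplementsOn (HalfOpenDom n A H) f pp)
    {t : Profile n A} (ht : t ∈ HalfOpenDom n A H) :
    f t ∈ ChoiceSetOn (HalfOpenDom n A H) f t := by
  simp only [ChoiceSetOn, Set.mem_setOf_eq]
  intro ε hε hdom
  refine pad hp ht hdom rfl ?_
  intro i c hc
  have h1 : Function.update t (f t) (t (f t) + ε) c i = t c i := by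
    rw [Function.update_of_ne hc]
  have h2 : Function.update t (f t) (t (f t) + ε) (f t) i = t (f t) i + ε i := by
    rw [Function.update_self]; rfl
  rw [h1, h2]
  have := hε i; linarith

/-- strict transport: choice-set membership forces the choice at relatively-better profiles -/
lemma force (hp : ImplementsOn (HalfOpenDom n A H) f pp)
    (hn : 0 < n) (hA : 3 ≤ Fintype.card A) (hH : (0:EReal) < H)
    {t s : Profile n A} (ht : t ∈ HalfOpenDom n A H) (hs : s ∈ HalfOpenDom n A H) {a : A}
    (hmem : a ∈ ChoiceSetOn (HalfOpenDom n A H) f t)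
    (hgap : ∀ i : Fin n, ∀ c : A, c ≠ a → s c i - t c i < s a i - t a i) : f s = a := by
  classical
  obtain ⟨θ, hθ, hroom⟩ := roomLemma hn hH (fun i => t a i) (fun i => (ht a i).2)
  obtain ⟨b0, hb0⟩ := Fintype.exists_ne_of_one_lt_card (by omega) a
  have hne : (Finset.univ.erase a).Nonempty :=
    ⟨b0, Finset.mem_erase.mpr ⟨hb0, Finset.mem_univ _⟩⟩
  set g : Fin n → ℝ :=
    fun i => (Finset.univ.erase a).inf' hne (fun c => (s a i - t a i) - (s c i - t c i)) with hg
  have hgpos : ∀ i, 0 < g i := by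
    intro i
    rw [hg, Finset.lt_inf'_iff]
    intro c hc
    have := hgap i c (Finset.ne_of_mem_erase hc)
    linarith
  have hgle : ∀ i c, c ≠ a → g i ≤ (s a i - t a i) - (s c i - t c i) := by
    intro i c hc
    exact Finset.inf'_le _ (Finset.mem_erase.mpr ⟨hc, Finset.mem_univ _⟩)
  set ε : Fin n → ℝ := fun i => min (g i / 2) θ with hε
  have hεpos : ∀ i, 0 < ε i := fun i => lt_min (by linarith [hgpos i]) hθ
  set u := Function.update t a (t a + ε) with hu
  have hudom : u ∈ HalfOpenDom n A H := by
    intro c i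
    by_cases hc : c = a
    · subst hc
      rw [hu, Function.update_self]
      constructor
      · have := (ht c i).1; have := hεpos i
        simp only [Pi.add_apply]; linarith
      · simp only [Pi.add_apply]
        have h1 : t c i + ε i ≤ t c i + θ := by
          have : ε i ≤ θ := min_le_right _ _
          linarith
        calc ((t c i + ε i : ℝ) : EReal) ≤ ((t c i + θ : ℝ) : EReal) := by exact_mod_cast h1
          _ < H := hroom i
    · rw [hu, Function.update_of_ne hc]
      exact ht c i
  have hf1 : f u = a := hmem ε hεpos hudom
  refine pad hp hudom hs hf1 ?_
  intro i c hc
  have h1 : u c i = t c i := by rw [hu, Function.update_of_ne hc]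
  have h2 : u a i = t a i + ε i := by rw [hu, Function.update_self]; rfl
  rw [h1, h2]
  have h3 := hgle i c hc
  have h4 : ε i ≤ g i / 2 := min_le_left _ _
  have := hgpos i
  linarith

/-- weak transport of choice-set membership -/
lemma transport (hp : ImplementsOn (HalfOpenDom n A H) f pp)
    (hn : 0 < n) (hA : 3 ≤ Fintype.card A) (hH : (0:EReal) < H)
    {t s : Profile n A} (ht : t ∈ HalfOpenDom n A H) (hs : s ∈ HalfOpenDom n A H) {a : A}
    (hmem : a ∈ ChoiceSetOn (HalfOpenDom n A H) f t)
    (hgap : ∀ i : Fin n, ∀ c : A, c ≠ a → s c i - t c i ≤ s a i - t a i) :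
    a ∈ ChoiceSetOn (HalfOpenDom n A H) f s := by
  simp only [ChoiceSetOn, Set.mem_setOf_eq]
  intro ε hε hdom
  refine force hp hn hA hH ht hdom hmem ?_
  intro i c hc
  have h1 : Function.update s a (s a + ε) c i = s c i := by rw [Function.update_of_ne hc]
  have h2 : Function.update s a (s a + ε) a i = s a i + ε i := by
    rw [Function.update_self]; rfl
  rw [h1, h2]
  have := hgap i c hc
  have := hε i
  linarith

/-- anonymity transport of choice-set membership -/
lemma anon_mem (hanon : AnonymousOn (HalfOpenDom n A H) f)
    {t : Profile n A} (ht : t ∈ HalfOpenDom n A H) (σ : Equiv.Perm (Fin n)) {a : A}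
    (hmem : a ∈ ChoiceSetOn (HalfOpenDom n A H) f t) :
    a ∈ ChoiceSetOn (HalfOpenDom n A H) f (fun c i => t c (σ i)) := by
  simp only [ChoiceSetOn, Set.mem_setOf_eq] at hmem ⊢
  intro ε hε hdom
  set ε' : Fin n → ℝ := fun j => ε (σ.symm j) with hε'
  set u := Function.update t a (t a + ε') with hu
  have hperm : (Function.update (fun c i => t c (σ i)) a ((fun c i => t c (σ i)) a + ε))
      = (fun c i => u c (σ i)) := by
    funext c i
    by_cases hc : c = a
    · subst hc
      rw [Function.update_self, hu]
      simp only [Pi.add_apply]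
      rw [Function.update_self]
      simp only [Pi.add_apply, hε', Equiv.symm_apply_apply]
    · rw [Function.update_of_ne hc, hu, Function.update_of_ne hc]
  rw [hperm] at hdom ⊢
  have hudom : u ∈ HalfOpenDom n A H := by
    intro c j
    have h2 := hdom c (σ.symm j)
    simpa [Equiv.apply_symm_apply] using h2
  rw [hanon u hudom σ]
  exact hmem ε' (fun j => hε _) hudom

/-- neutrality transport of choice-set membership -/
lemma choice_perm (hneu : NeutralOn (HalfOpenDom n A H) f)
    {t : Profile n A} (ht : t ∈ HalfOpenDom n A H) (ρ : Equiv.Perm A) {a : A}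
    (hmem : a ∈ ChoiceSetOn (HalfOpenDom n A H) f t) :
    ρ a ∈ ChoiceSetOn (HalfOpenDom n A H) f (fun e => t (ρ.symm e)) := by
  rw [hneu t ht ρ]
  exact ⟨a, hmem, rfl⟩

lemma three (hA : 3 ≤ Fintype.card A) : ∃ a b c : A, a ≠ b ∧ a ≠ c ∧ b ≠ c := by
  classical
  obtain ⟨s, _, hcard⟩ := Finset.exists_subset_card_eq
    (by simpa using hA : 3 ≤ (Finset.univ : Finset A).card)
  obtain ⟨a, b, c, hab, hac, hbc, _⟩ := Finset.card_eq_three.mp hcard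
  exact ⟨a, b, c, hab, hac, hbc⟩

lemma perm_pair {a b a' b' : A} (hab : a ≠ b) (h' : a' ≠ b') :
    ∃ ρ : Equiv.Perm A, ρ a = a' ∧ ρ b = b' := by
  classical
  set τ1 := Equiv.swap a a' with hτ1
  set b1 := τ1 b with hb1def
  have ha' : τ1 a = a' := Equiv.swap_apply_left a a'
  have hb1 : b1 ≠ a' := by
    intro h
    apply hab
    have : τ1 b = τ1 a := by rw [ha']; exact h
    exact (τ1.injective this).symm
  refine ⟨τ1.trans (Equiv.swap b1 b'), ?_, ?_⟩
  · simp only [Equiv.trans_apply, ha']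
    exact Equiv.swap_apply_of_ne_of_ne (Ne.symm hb1) h'
  · simp only [Equiv.trans_apply, ← hb1def]
    exact Equiv.swap_apply_left b1 b'

/-- two-column profile -/
def qq (x y : Fin n → ℝ) (a b : A) : Profile n A :=
  fun c i => if c = a then x i else if c = b then y i else 0

/-- three-column profile -/
def q3 (x y z : Fin n → ℝ) (a b c : A) : Profile n A :=
  fun e i => if e = a then x i else if e = b then y i else if e = c then z i else 0

lemma qq_mem (hH : (0:EReal) < H) {x y : Fin n → ℝ} (hx : DD n H x) (hy : DD n H y)
    {a b : A} : qq x y a b ∈ HalfOpenDom n A H := by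
  intro c i
  simp only [qq]
  split_ifs
  · exact hx i
  · exact hy i
  · exact ⟨le_refl 0, by exact_mod_cast hH⟩

lemma q3_mem (hH : (0:EReal) < H) {x y z : Fin n → ℝ} (hx : DD n H x) (hy : DD n H y)
    (hz : DD n H z) {a b c : A} : q3 x y z a b c ∈ HalfOpenDom n A H := by
  intro e i
  simp only [q3]
  split_ifs
  · exact hx i
  · exact hy i
  · exact hz i
  · exact ⟨le_refl 0, by exact_mod_cast hH⟩

lemma qq_swap {x y : Fin n → ℝ} {a b : A} (hab : a ≠ b) : qq x y a b = qq y x b a := by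
  funext c i
  simp only [qq]
  by_cases h1 : c = a
  · subst h1; rw [if_pos rfl, if_neg hab, if_pos rfl]
  · by_cases h2 : c = b
    · subst h2; rw [if_neg h1, if_pos rfl, if_pos rfl]
    · rw [if_neg h1, if_neg h2, if_neg h2, if_neg h1]

/-- the social welfare relation induced on utility vectors -/
def Rel (n : ℕ) (A : Type*) [Fintype A] [DecidableEq A] (H : EReal)
    (f : Profile n A → A) (x y : Fin n → ℝ) : Prop :=
  ∃ a b : A, a ≠ b ∧ a ∈ ChoiceSetOn (HalfOpenDom n A H) f (qq x y a b)

lemma rel_at (hneu : NeutralOn (HalfOpenDom n A H) f) (hH : (0:EReal) < H)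
    {x y : Fin n → ℝ} (hx : DD n H x) (hy : DD n H y)
    (h : Rel n A H f x y) {a' b' : A} (h' : a' ≠ b') :
    a' ∈ ChoiceSetOn (HalfOpenDom n A H) f (qq x y a' b') := by
  obtain ⟨a, b, hab, hm⟩ := h
  obtain ⟨ρ, hρa, hρb⟩ := perm_pair hab h'
  have h2 := choice_perm hneu (qq_mem hH hx hy (a := a) (b := b)) ρ hm
  have h3 : (fun e => qq x y a b (ρ.symm e)) = qq x y (ρ a) (ρ b) := by
    funext e i
    simp only [qq]
    by_cases h1 : e = ρ a
    · have : ρ.symm e = a := by rw [h1, Equiv.symm_apply_apply]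
      rw [if_pos this, if_pos h1]
    · have hna : ρ.symm e ≠ a := by
        intro hcc; apply h1; rw [← hcc, Equiv.apply_symm_apply]
      rw [if_neg hna, if_neg h1]
      by_cases h2' : e = ρ b
      · have : ρ.symm e = b := by rw [h2', Equiv.symm_apply_apply]
        rw [if_pos this, if_pos h2']
      · have hnb : ρ.symm e ≠ b := by
          intro hcc; apply h2'; rw [← hcc, Equiv.apply_symm_apply]
        rw [if_neg hnb, if_neg h2']
  rw [h3, hρa, hρb] at h2
  exact h2

/-- every alternative is in the choice set of a constant profile -/
lemma const_choice (hp : ImplementsOn (HalfOpenDom n A H) f pp)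
    (hneu : NeutralOn (HalfOpenDom n A H) f)
    {w : Fin n → ℝ} (hw : DD n H w) (d : A) :
    d ∈ ChoiceSetOn (HalfOpenDom n A H) f (fun _ => w) := by
  have hK : (fun (_ : A) => w) ∈ HalfOpenDom n A H := fun c i => hw i
  have h0 := f_mem hp hK
  set ρ := Equiv.swap (f (fun _ => w)) d with hρ
  have h1 := choice_perm hneu hK ρ h0
  have h2 : (fun e => (fun (_:A) => w) (ρ.symm e)) = (fun (_:A) => w) := rfl
  rw [h2] at h1
  rw [hρ, Equiv.swap_apply_left] at h1
  exact h1

/-- a strictly dominant column is chosen -/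
lemma dom_force (hp : ImplementsOn (HalfOpenDom n A H) f pp)
    (hneu : NeutralOn (HalfOpenDom n A H) f)
    (hn : 0 < n) (hA : 3 ≤ Fintype.card A) (hH : (0:EReal) < H)
    {s : Profile n A} (hs : s ∈ HalfOpenDom n A H) {d : A}
    (hdom : ∀ i : Fin n, ∀ c : A, c ≠ d → s c i < s d i) : f s = d := by
  have hw : DD n H (s d) := fun i => hs d i
  have h1 := const_choice hp hneu hw d
  refine force hp hn hA hH (fun c i => hw i) hs h1 ?_
  intro i c hc
  have := hdom i c hc
  simp only [sub_self]
  linarith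

lemma qq_a {x y : Fin n → ℝ} {a b : A} {i : Fin n} : qq x y a b a i = x i := by simp [qq]

lemma qq_b {x y : Fin n → ℝ} {a b : A} (hba : b ≠ a) {i : Fin n} :
    qq x y a b b i = y i := by simp [qq, hba]

lemma qq_o {x y : Fin n → ℝ} {a b c : A} (h1 : c ≠ a) (h2 : c ≠ b) {i : Fin n} :
    qq x y a b c i = 0 := by simp [qq, h1, h2]

lemma mkDD {U : ℝ} (hU : (U:EReal) < H) {v : Fin n → ℝ}
    (h0 : ∀ i, 0 ≤ v i) (hb : ∀ i, v i ≤ U) : DD n H v :=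
  fun i => ⟨h0 i, lt_of_le_of_lt (by exact_mod_cast hb i) hU⟩

/-- weak Pareto: a strictly dominated column cannot be ranked above -/
lemma par (hp : ImplementsOn (HalfOpenDom n A H) f pp)
    (hneu : NeutralOn (HalfOpenDom n A H) f)
    (hn : 0 < n) (hA : 3 ≤ Fintype.card A) (hH : (0:EReal) < H)
    {x y : Fin n → ℝ} (hx : DD n H x) (hy : DD n H y)
    (hlt : ∀ i, x i < y i) (h : Rel n A H f x y) : False := by
  obtain ⟨a, b, hab, hm⟩ := h
  set ε : Fin n → ℝ := fun i => (y i - x i)/2 with hεdef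
  have hεpos : ∀ i, 0 < ε i := fun i => by have := hlt i; simp [hεdef]; linarith
  set u := Function.update (qq x y a b) a (qq x y a b a + ε) with hu
  have hql : ∀ i, qq x y a b a i + ε i < y i := by
    intro i; rw [qq_a]; have := hlt i; simp [hεdef]; linarith
  have hudom : u ∈ HalfOpenDom n A H := by
    intro c i
    by_cases hc : c = a
    · subst hc
      rw [hu, Function.update_self]
      simp only [Pi.add_apply]
      constructor
      · have := (hx i).1; have := hεpos i; rw [qq_a]; linarith
      · calc ((qq x y c b c i + ε i : ℝ) : EReal) ≤ ((y i : ℝ) : EReal) := by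
              exact_mod_cast le_of_lt (hql i)
          _ < H := (hy i).2
    · rw [hu, Function.update_of_ne hc]
      exact qq_mem hH hx hy c i
  have hfa : f u = a := hm ε hεpos hudom
  have hfb : f u = b := by
    refine dom_force hp hneu hn hA hH hudom ?_
    intro i c hc
    have hub : u b i = y i := by
      rw [hu, Function.update_of_ne (Ne.symm hab), qq_b (Ne.symm hab)]
    rw [hub]
    by_cases hca : c = a
    · subst hca
      rw [hu, Function.update_self]
      simp only [Pi.add_apply]
      exact hql i
    · rw [hu, Function.update_of_ne hca, qq_o hca hc]
      have := (hx i).1; have := hlt i; linarith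
  exact hab (hfa.symm.trans hfb)

/-- strict separation: x ⊵ y and y ⊵ x + Δ are contradictory -/
lemma ss (hp : ImplementsOn (HalfOpenDom n A H) f pp)
    (hneu : NeutralOn (HalfOpenDom n A H) f)
    (hn : 0 < n) (hA : 3 ≤ Fintype.card A) (hH : (0:EReal) < H)
    {x y Δ : Fin n → ℝ} (hx : DD n H x) (hy : DD n H y) (hΔ : ∀ i, 0 < Δ i)
    (hx' : DD n H (fun i => x i + Δ i))
    (h1 : Rel n A H f x y) (h2 : Rel n A H f y (fun i => x i + Δ i)) : False := by
  obtain ⟨a, b, c0, hab, hac, hbc⟩ := three hA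
  have hm1 := rel_at hneu hH hx hy h1 hab
  have hm2 := rel_at hneu hH hy hx' h2 (Ne.symm hab)
  obtain ⟨θ1, hθ1, hroom1⟩ := roomLemma hn hH (fun i => x i + Δ i) (fun i => (hx' i).2)
  obtain ⟨θ2, hθ2, hroom2⟩ := roomLemma hn hH y (fun i => (hy i).2)
  have hne : (Finset.univ : Finset (Fin n)).Nonempty := ⟨⟨0, hn⟩, Finset.mem_univ _⟩
  set δm := Finset.univ.inf' hne Δ with hδm
  have hδmpos : 0 < δm := by
    rw [hδm, Finset.lt_inf'_iff]; exact fun i _ => hΔ i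
  have hδmle : ∀ i, δm ≤ Δ i := fun i => Finset.inf'_le _ (Finset.mem_univ i)
  set θ := min (min (θ1/2) (θ2/4)) (δm/2) with hθdef
  have hθpos : 0 < θ := lt_min (lt_min (by linarith) (by linarith)) (by linarith)
  have hθΔ : ∀ i, θ < Δ i := by
    intro i
    have hh : θ ≤ δm/2 := min_le_right _ _
    have := hδmle i
    linarith
  have hθ1' : θ ≤ θ1/2 := le_trans (min_le_left _ _) (min_le_left _ _)
  have hθ2' : θ ≤ θ2/4 := le_trans (min_le_left _ _) (min_le_right _ _)
  set u := qq (fun i => x i + Δ i + θ) (fun i => y i + 2*θ) a b with hudef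
  have hDD1 : DD n H (fun i => x i + Δ i + θ) := by
    intro i
    have h01 := (hx' i).1
    dsimp only at h01 ⊢
    constructor
    · linarith
    · calc ((x i + Δ i + θ : ℝ) : EReal) ≤ ((x i + Δ i + θ1 : ℝ) : EReal) := by
            exact_mod_cast (by linarith : x i + Δ i + θ ≤ x i + Δ i + θ1)
        _ < H := hroom1 i
  have hDD2 : DD n H (fun i => y i + 2*θ) := by
    intro i
    have h01 := (hy i).1
    dsimp only
    constructor
    · linarith
    · calc ((y i + 2*θ : ℝ) : EReal) ≤ ((y i + θ2 : ℝ) : EReal) := by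
            exact_mod_cast (by linarith : y i + 2*θ ≤ y i + θ2)
        _ < H := hroom2 i
  have hudom : u ∈ HalfOpenDom n A H := qq_mem hH hDD1 hDD2
  have hfa : f u = a := by
    refine force hp hn hA hH (qq_mem hH hx hy) hudom hm1 ?_
    intro i c hc
    have hua : u a i - qq x y a b a i = Δ i + θ := by
      rw [hudef, qq_a, qq_a]; ring
    rw [hua]
    by_cases hcb : c = b
    · have : u c i - qq x y a b c i = 2*θ := by
        rw [hcb, hudef, qq_b (Ne.symm hab), qq_b (Ne.symm hab)]; ring
      rw [this]
      have := hθΔ i; linarith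
    · have : u c i - qq x y a b c i = 0 := by
        rw [hudef, qq_o hc hcb, qq_o hc hcb]; ring
      rw [this]
      have := hΔ i; linarith
  have hfb : f u = b := by
    refine force hp hn hA hH (qq_mem hH hy hx') hudom hm2 ?_
    intro i c hc
    have hub : u b i - qq y (fun j => x j + Δ j) b a b i = 2*θ := by
      rw [hudef, qq_b (Ne.symm hab), qq_a]; ring
    rw [hub]
    by_cases hca : c = a
    · have : u c i - qq y (fun j => x j + Δ j) b a c i = θ := by
        rw [hca, hudef, qq_a, qq_b hab]; ring
      rw [this]; linarith
    · have : u c i - qq y (fun j => x j + Δ j) b a c i = 0 := by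
        rw [hudef, qq_o hca hc, qq_o hc hca]; ring
      rw [this]; linarith
  exact hab (hfa.symm.trans hfb)

/-- the zero column cannot be chosen against a strictly positive column -/
lemma zero_col_absurd (hp : ImplementsOn (HalfOpenDom n A H) f pp)
    (hneu : NeutralOn (HalfOpenDom n A H) f)
    (hn : 0 < n) (hA : 3 ≤ Fintype.card A) (hH : (0:EReal) < H)
    {x : Fin n → ℝ} (hx : DD n H x) (hxp : ∀ i, 0 < x i) {a e : A} (hea : e ≠ a)
    (hmem : e ∈ ChoiceSetOn (HalfOpenDom n A H) f (qq x 0 a e)) : False := by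
  have h0 : DD n H (0 : Fin n → ℝ) := fun i => ⟨le_refl _, by exact_mod_cast hH⟩
  have hs0 : qq x 0 a e ∈ HalfOpenDom n A H := qq_mem hH hx h0
  set ε : Fin n → ℝ := fun i => x i / 2 with hεdef
  have hεpos : ∀ i, 0 < ε i := fun i => by have := hxp i; simp [hεdef]; linarith
  set u := Function.update (qq x 0 a e) e (qq x 0 a e e + ε) with hu
  have hue : ∀ i, u e i = x i / 2 := by
    intro i
    rw [hu, Function.update_self]
    simp only [Pi.add_apply]
    rw [qq_b hea, hεdef]
    simp
  have hudom : u ∈ HalfOpenDom n A H := by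
    intro c i
    by_cases hc : c = e
    · subst hc
      rw [hue]
      constructor
      · have := hxp i; linarith
      · calc ((x i / 2 : ℝ) : EReal) ≤ ((x i : ℝ) : EReal) := by
              exact_mod_cast (by have := hxp i; linarith : x i / 2 ≤ x i)
          _ < H := (hx i).2
    · rw [hu, Function.update_of_ne hc]
      exact hs0 c i
  have hfe : f u = e := hmem ε hεpos hudom
  have hfa : f u = a := by
    refine dom_force hp hneu hn hA hH hudom ?_
    intro i c hc
    have hua : u a i = x i := by
      rw [hu, Function.update_of_ne (Ne.symm hea), qq_a]
    rw [hua]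
    by_cases hce : c = e
    · subst hce; rw [hue]; have := hxp i; linarith
    · rw [hu, Function.update_of_ne hce, qq_o hc hce]
      exact hxp i
  exact hea (hfe.symm.trans hfa)

/-- completeness on strictly positive vectors -/
lemma total (hp : ImplementsOn (HalfOpenDom n A H) f pp)
    (hneu : NeutralOn (HalfOpenDom n A H) f)
    (hn : 0 < n) (hA : 3 ≤ Fintype.card A) (hH : (0:EReal) < H)
    {x y : Fin n → ℝ} (hx : DD n H x) (hy : DD n H y)
    (hxp : ∀ i, 0 < x i) (hyp : ∀ i, 0 < y i) :
    Rel n A H f x y ∨ Rel n A H f y x := by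
  obtain ⟨a, b, c0, hab, hac, hbc⟩ := three hA
  have hq : qq x y a b ∈ HalfOpenDom n A H := qq_mem hH hx hy
  have he := f_mem hp hq
  by_cases h1 : f (qq x y a b) = a
  · have ha2 := he
    rw [h1] at ha2
    exact Or.inl ⟨a, b, hab, ha2⟩
  by_cases h2 : f (qq x y a b) = b
  · have hb2 := he
    rw [h2, qq_swap hab] at hb2
    exact Or.inr ⟨b, a, Ne.symm hab, hb2⟩
  exfalso
  have h0 : DD n H (0 : Fin n → ℝ) := fun i => ⟨le_refl _, by exact_mod_cast hH⟩
  refine zero_col_absurd hp hneu hn hA hH hx hxp h1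
    (transport hp hn hA hH hq (qq_mem hH hx h0) he ?_)
  intro i c hc
  have he1 : qq x (0:Fin n → ℝ) a (f (qq x y a b)) (f (qq x y a b)) i = 0 := by
    rw [qq_b h1]; rfl
  have he2 : qq x y a b (f (qq x y a b)) i = 0 := qq_o h1 h2
  rw [he1, he2]
  simp only [sub_zero, sub_self]
  by_cases hca : c = a
  · subst hca; rw [qq_a, qq_a]; simp
  · by_cases hcf : c = f (qq x y a b)
    · subst hcf; rw [he1, he2]; simp
    · rw [qq_o hca hcf]
      by_cases hcb : c = b
      · subst hcb
        rw [qq_b (Ne.symm hab)]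
        have := (hy i).1; linarith
      · rw [qq_o hca hcb]; simp

lemma q3_a {x y z : Fin n → ℝ} {a b c : A} {i : Fin n} : q3 x y z a b c a i = x i := by
  simp [q3]

lemma q3_b {x y z : Fin n → ℝ} {a b c : A} (hba : b ≠ a) {i : Fin n} :
    q3 x y z a b c b i = y i := by simp [q3, hba]

lemma q3_c {x y z : Fin n → ℝ} {a b c : A} (hca : c ≠ a) (hcb : c ≠ b) {i : Fin n} :
    q3 x y z a b c c i = z i := by simp [q3, hca, hcb]

lemma q3_o {x y z : Fin n → ℝ} {a b c e : A} (h1 : e ≠ a) (h2 : e ≠ b) (h3 : e ≠ c)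
    {i : Fin n} : q3 x y z a b c e i = 0 := by simp [q3, h1, h2, h3]

/-- trichotomy via a three-column profile -/
lemma trichot (hp : ImplementsOn (HalfOpenDom n A H) f pp)
    (hneu : NeutralOn (HalfOpenDom n A H) f)
    (hn : 0 < n) (hA : 3 ≤ Fintype.card A) (hH : (0:EReal) < H)
    {x y z : Fin n → ℝ} (hx : DD n H x) (hy : DD n H y) (hz : DD n H z)
    (hxp : ∀ i, 0 < x i) :
    (Rel n A H f x y ∧ Rel n A H f x z) ∨ (Rel n A H f y x ∧ Rel n A H f y z) ∨
      (Rel n A H f z x ∧ Rel n A H f z y) := by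
  obtain ⟨a, b, c0, hab, hac, hbc⟩ := three hA
  set u := q3 x y z a b c0 with hudef
  have hu : u ∈ HalfOpenDom n A H := q3_mem hH hx hy hz
  have he := f_mem hp hu
  by_cases h1 : f u = a
  · have ha2 := he; rw [h1] at ha2
    refine Or.inl ⟨⟨a, b, hab, transport hp hn hA hH hu (qq_mem hH hx hy) ha2 ?_⟩,
      ⟨a, c0, hac, transport hp hn hA hH hu (qq_mem hH hx hz) ha2 ?_⟩⟩
    · intro i c hc
      rw [qq_a, hudef, q3_a, sub_self]
      by_cases hcb : c = b
      · rw [hcb, qq_b (Ne.symm hab), q3_b (Ne.symm hab), sub_self]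
      · rw [qq_o hc hcb]
        by_cases hcc : c = c0
        · rw [hcc, q3_c (Ne.symm hac) (Ne.symm hbc)]
          have := (hz i).1; linarith
        · rw [q3_o hc hcb hcc, sub_self]
    · intro i c hc
      rw [qq_a, hudef, q3_a, sub_self]
      by_cases hcb : c = b
      · rw [hcb, qq_o (Ne.symm hab) hbc, q3_b (Ne.symm hab)]
        have := (hy i).1; linarith
      · by_cases hcc : c = c0
        · rw [hcc, qq_b (Ne.symm hac), q3_c (Ne.symm hac) (Ne.symm hbc), sub_self]
        · rw [qq_o hc hcc, q3_o hc hcb hcc, sub_self]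
  by_cases h2 : f u = b
  · have hb2 := he; rw [h2] at hb2
    refine Or.inr (Or.inl ⟨⟨b, a, Ne.symm hab,
        transport hp hn hA hH hu (qq_mem hH hy hx) hb2 ?_⟩,
      ⟨b, c0, hbc, transport hp hn hA hH hu (qq_mem hH hy hz) hb2 ?_⟩⟩)
    · intro i c hc
      rw [qq_a, hudef, q3_b (Ne.symm hab), sub_self]
      by_cases hca : c = a
      · rw [hca, qq_b hab, q3_a, sub_self]
      · rw [qq_o hc hca]
        by_cases hcc : c = c0
        · rw [hcc, q3_c (Ne.symm hac) (Ne.symm hbc)]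
          have := (hz i).1; linarith
        · rw [q3_o hca hc hcc, sub_self]
    · intro i c hc
      rw [qq_a, hudef, q3_b (Ne.symm hab), sub_self]
      by_cases hca : c = a
      · rw [hca, qq_o hab hac, q3_a]
        have := (hx i).1; linarith
      · by_cases hcc : c = c0
        · rw [hcc, qq_b (Ne.symm hbc), q3_c (Ne.symm hac) (Ne.symm hbc), sub_self]
        · rw [qq_o hc hcc, q3_o hca hc hcc, sub_self]
  by_cases h3 : f u = c0
  · have hc2 := he; rw [h3] at hc2
    refine Or.inr (Or.inr ⟨⟨c0, a, Ne.symm hac,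
        transport hp hn hA hH hu (qq_mem hH hz hx) hc2 ?_⟩,
      ⟨c0, b, Ne.symm hbc, transport hp hn hA hH hu (qq_mem hH hz hy) hc2 ?_⟩⟩)
    · intro i c hc
      rw [qq_a, hudef, q3_c (Ne.symm hac) (Ne.symm hbc), sub_self]
      by_cases hca : c = a
      · rw [hca, qq_b hac, q3_a, sub_self]
      · by_cases hcb : c = b
        · rw [hcb, qq_o hbc (Ne.symm hab), q3_b (Ne.symm hab)]
          have := (hy i).1; linarith
        · rw [qq_o hc hca, q3_o hca hcb hc, sub_self]
    · intro i c hc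
      rw [qq_a, hudef, q3_c (Ne.symm hac) (Ne.symm hbc), sub_self]
      by_cases hca : c = a
      · rw [hca, qq_o hac hab, q3_a]
        have := (hx i).1; linarith
      · by_cases hcb : c = b
        · rw [hcb, qq_b hbc, q3_b (Ne.symm hab), sub_self]
        · rw [qq_o hc hcb, q3_o hca hcb hc, sub_self]
  exfalso
  have h0 : DD n H (0 : Fin n → ℝ) := fun i => ⟨le_refl _, by exact_mod_cast hH⟩
  refine zero_col_absurd hp hneu hn hA hH hx hxp h1
    (transport hp hn hA hH hu (qq_mem hH hx h0) he ?_)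
  intro i c hc
  have he1 : qq x (0:Fin n → ℝ) a (f u) (f u) i = 0 := by rw [qq_b h1]; rfl
  have he2 : u (f u) i = 0 := by rw [hudef]; exact q3_o h1 h2 h3
  rw [he1, he2, sub_self]
  by_cases hca : c = a
  · rw [hca, qq_a, hudef, q3_a, sub_self]
  · by_cases hcf : c = f u
    · rw [hcf, he1, he2, sub_self]
    · rw [qq_o hca hcf]
      by_cases hcb : c = b
      · rw [hcb, hudef, q3_b (Ne.symm hab)]
        have := (hy i).1; linarith
      · by_cases hcc : c = c0
        · rw [hcc, hudef, q3_c (Ne.symm hac) (Ne.symm hbc)]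
          have := (hz i).1; linarith
        · rw [hudef, q3_o hca hcb hcc, sub_self]

/-- strictification: raise the winner a bit to get a strict comparison -/
lemma strictify (hp : ImplementsOn (HalfOpenDom n A H) f pp)
    (hneu : NeutralOn (HalfOpenDom n A H) f)
    (hn : 0 < n) (hA : 3 ≤ Fintype.card A) (hH : (0:EReal) < H)
    {x y : Fin n → ℝ} {θ : ℝ} (hθ : 0 < θ)
    (hx : DD n H x) (hy : DD n H y) (hxp : ∀ i, 0 < x i) (hyp : ∀ i, 0 < y i)
    (hx' : DD n H (fun i => x i + θ)) (h : Rel n A H f x y) :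
    Rel n A H f (fun i => x i + θ) y ∧ ¬ Rel n A H f y (fun i => x i + θ) := by
  have hns : ¬ Rel n A H f y (fun i => x i + θ) := fun h2 =>
    ss hp hneu hn hA hH hx hy (fun i => hθ) hx' h h2
  refine ⟨?_, hns⟩
  rcases total hp hneu hn hA hH hx' hy
      (fun i => by have := (hx i).1; linarith) hyp with h1 | h2
  · exact h1
  · exact absurd h2 hns

/-- translation invariance (upward) -/
lemma rel_shift (hp : ImplementsOn (HalfOpenDom n A H) f pp)
    (hneu : NeutralOn (HalfOpenDom n A H) f)
    (hn : 0 < n) (hA : 3 ≤ Fintype.card A) (hH : (0:EReal) < H)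
    {x y z : Fin n → ℝ} (hz : ∀ i, 0 ≤ z i) (hx : DD n H x) (hy : DD n H y)
    (hx2 : DD n H (fun i => x i + z i)) (hy2 : DD n H (fun i => y i + z i))
    (h : Rel n A H f x y) :
    Rel n A H f (fun i => x i + z i) (fun i => y i + z i) := by
  obtain ⟨a, b, c0, hab, hac, hbc⟩ := three hA
  have hm := rel_at hneu hH hx hy h hab
  refine ⟨a, b, hab, transport hp hn hA hH (qq_mem hH hx hy) (qq_mem hH hx2 hy2) hm ?_⟩
  intro i c hc
  rw [qq_a, qq_a]
  have hra : (fun i => x i + z i) i - x i = z i := by show x i + z i - x i = z i; ring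
  rw [hra]
  by_cases hcb : c = b
  · rw [hcb, qq_b (Ne.symm hab), qq_b (Ne.symm hab)]
    show (fun i => y i + z i) i - y i ≤ z i
    show y i + z i - y i ≤ z i
    linarith
  · rw [qq_o hc hcb, qq_o hc hcb, sub_self]
    exact hz i

/-- anonymity invariance -/
lemma rel_perm (hanon : AnonymousOn (HalfOpenDom n A H) f)
    (hneu : NeutralOn (HalfOpenDom n A H) f)
    (hA : 3 ≤ Fintype.card A) (hH : (0:EReal) < H)
    {x y : Fin n → ℝ} (hx : DD n H x) (hy : DD n H y) (σ : Equiv.Perm (Fin n))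
    (h : Rel n A H f x y) :
    Rel n A H f (fun i => x (σ i)) (fun i => y (σ i)) := by
  obtain ⟨a, b, c0, hab, hac, hbc⟩ := three hA
  have hm := rel_at hneu hH hx hy h hab
  have h2 := anon_mem hanon (qq_mem hH hx hy) σ hm
  have h3 : (fun c i => qq x y a b c (σ i))
      = qq (fun i => x (σ i)) (fun i => y (σ i)) a b := by
    funext c i
    rfl
  rw [h3] at h2
  exact ⟨a, b, hab, h2⟩

/-- transitivity across two strict links -/
lemma chain_step (hp : ImplementsOn (HalfOpenDom n A H) f pp)
    (hneu : NeutralOn (HalfOpenDom n A H) f)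
    (hn : 0 < n) (hA : 3 ≤ Fintype.card A) (hH : (0:EReal) < H)
    {u v w : Fin n → ℝ} (hu : DD n H u) (hv : DD n H v) (hw : DD n H w)
    (hup : ∀ i, 0 < u i)
    (h1 : Rel n A H f u v) (h1' : ¬ Rel n A H f v u)
    (h2 : Rel n A H f v w) (h2' : ¬ Rel n A H f w v) : Rel n A H f u w := by
  rcases trichot hp hneu hn hA hH hu hv hw hup with ⟨_, h⟩ | ⟨h, _⟩ | ⟨_, h⟩
  · exact h
  · exact absurd h h1'
  · exact absurd h h2'

lemma rel_congr {x x' y y' : Fin n → ℝ} (hx : ∀ i, x i = x' i) (hy : ∀ i, y i = y' i)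
    (h : Rel n A H f x y) : Rel n A H f x' y' := by
  obtain ⟨a, b, hab, hm⟩ := h
  have hq : qq x y a b = qq x' y' a b := by
    funext c i
    simp only [qq, hx i, hy i]
  exact ⟨a, b, hab, hq ▸ hm⟩

open Fin.NatCast in
/-- the cyclic chain: a relation instance whose loser has the larger total is absurd -/
lemma chain (hp : ImplementsOn (HalfOpenDom n A H) f pp)
    (hneu : NeutralOn (HalfOpenDom n A H) f) (hanon : AnonymousOn (HalfOpenDom n A H) f)
    (hn : 0 < n) (hA : 3 ≤ Fintype.card A) (hH : (0:EReal) < H)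
    {L δ U : ℝ} (hU : (U:EReal) < H) (hL : 0 < L)
    {x y : Fin n → ℝ} (h : Rel n A H f x y)
    (hxp : ∀ i, 0 < x i) (hyp : ∀ i, 0 < y i)
    (hbx : ∀ i, x i ≤ L) (hby : ∀ i, y i ≤ L)
    (hδ : ∀ i, |y i - x i| ≤ δ) (hδpos : 0 < δ)
    (hG : 0 < (∑ i, y i) - ∑ i, x i)
    (hroom : L + (3*n+2)*δ ≤ U) : False := by
  haveI : NeZero n := ⟨hn.ne'⟩
  have hnR : (0:ℝ) < n := by exact_mod_cast hn
  have hLU : L ≤ U := by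
    have h1 : 0 < (3*(n:ℝ)+2)*δ := by positivity
    linarith
  have hx : DD n H x := mkDD hU (fun i => le_of_lt (hxp i))
    (fun i => le_trans (hbx i) hLU)
  have hy : DD n H y := mkDD hU (fun i => le_of_lt (hyp i))
    (fun i => le_trans (hby i) hLU)
  set G := (∑ i, y i) - ∑ i, x i with hGdef
  set θ := min (G/(4*n)) δ with hθdef
  have hθpos : 0 < θ := lt_min (div_pos hG (by linarith)) hδpos
  have hθδ : θ ≤ δ := min_le_right _ _
  have hθG : θ ≤ G/(4*n) := min_le_left _ _
  set d : Fin n → ℝ := fun i => y i - x i with hddef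
  set M := L + n*δ + (n+1)*θ with hMdef
  have hMpos : 0 < M := by nlinarith
  set u : ℕ → Fin n → ℝ :=
    fun j i => M + (∑ k ∈ Finset.range j, d ((k : Fin n) + i)) - j*θ with hudef
  have hps : ∀ j, j ≤ n → ∀ i : Fin n,
      |∑ k ∈ Finset.range j, d ((k : Fin n) + i)| ≤ n * δ := by
    intro j hj i
    calc |∑ k ∈ Finset.range j, d ((k : Fin n) + i)|
        ≤ ∑ k ∈ Finset.range j, |d ((k : Fin n) + i)| := Finset.abs_sum_le_sum_abs _ _
      _ ≤ ∑ _k ∈ Finset.range j, δ := Finset.sum_le_sum (fun k _ => hδ _)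
      _ = j * δ := by rw [Finset.sum_const, Finset.card_range, nsmul_eq_mul]
      _ ≤ n * δ := by
          have hjn : (j:ℝ) ≤ n := by exact_mod_cast hj
          nlinarith
  have hub : ∀ j, j ≤ n → ∀ i, u j i ≤ L + (3*n+1)*δ := by
    intro j hj i
    have h1 := (abs_le.mp (hps j hj i)).2
    have h2 : 0 ≤ (j:ℝ)*θ := mul_nonneg (by positivity) (le_of_lt hθpos)
    have h3 : (n+1)*θ ≤ (n+1)*δ := by nlinarith
    simp only [hudef, hMdef]
    nlinarith
  have hlb : ∀ j, j ≤ n → ∀ i, L + θ ≤ u j i := by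
    intro j hj i
    have h1 := (abs_le.mp (hps j hj i)).1
    have hjn : (j:ℝ) ≤ n := by exact_mod_cast hj
    have h2 : (j:ℝ)*θ ≤ (n:ℝ)*θ := by nlinarith
    simp only [hudef, hMdef]
    nlinarith
  have huU : ∀ j, j ≤ n → ∀ i, u j i ≤ U := by
    intro j hj i
    have := hub j hj i
    nlinarith
  have hupos : ∀ j, j ≤ n → ∀ i, 0 < u j i := by
    intro j hj i
    have := hlb j hj i
    linarith
  have hDDu : ∀ j, j ≤ n → DD n H (u j) :=
    fun j hj => mkDD hU (fun i => le_of_lt (hupos j hj i)) (huU j hj)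
  -- the links
  have link : ∀ j, j < n → Rel n A H f (u j) (u (j+1)) ∧ ¬ Rel n A H f (u (j+1)) (u j) := by
    intro j hj
    set σ : Equiv.Perm (Fin n) := Equiv.addLeft ((j : Fin n)) with hσdef
    set xx : Fin n → ℝ := fun i => x ((j : Fin n) + i) with hxxdef
    set yy : Fin n → ℝ := fun i => y ((j : Fin n) + i) with hyydef
    have hxxDD : DD n H xx := fun i => hx ((j : Fin n) + i)
    have hyyDD : DD n H yy := fun i => hy ((j : Fin n) + i)
    have hrel1 : Rel n A H f xx yy := by
      have h0 := rel_perm hanon hneu hA hH hx hy σ h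
      exact rel_congr (fun i => rfl) (fun i => rfl) h0
    set zz : Fin n → ℝ := fun i => u j i - xx i - θ with hzzdef
    have hzz : ∀ i, 0 ≤ zz i := by
      intro i
      have h1 := hlb j (le_of_lt hj) i
      have h2 : xx i ≤ L := hbx _
      simp only [hzzdef]
      linarith
    have epx : ∀ i, xx i + zz i = u j i - θ := by
      intro i; simp only [hzzdef]; ring
    have epy : ∀ i, yy i + zz i = u (j+1) i := by
      intro i
      have hsucc : u (j+1) i = u j i + d ((j : Fin n) + i) - θ := by
        simp only [hudef, Finset.sum_range_succ]
        push_cast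
        ring
      have hd : yy i - xx i = d ((j : Fin n) + i) := rfl
      simp only [hzzdef]
      rw [hsucc, ← hd]
      ring
    have hpxDD : DD n H (fun i => xx i + zz i) := by
      intro i
      constructor
      · have h1 := hlb j (le_of_lt hj) i
        have := epx i
        dsimp only at this ⊢
        rw [this]; linarith
      · have h1 := huU j (le_of_lt hj) i
        have := epx i
        dsimp only at this ⊢
        rw [this]
        have hle : u j i - θ ≤ U := by linarith
        exact lt_of_le_of_lt (by exact_mod_cast hle) hU
    have hpyDD : DD n H (fun i => yy i + zz i) := by
      intro i
      have := epy i
      dsimp only at this ⊢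
      rw [this]
      exact hDDu (j+1) hj i
    have hrel2 := rel_shift hp hneu hn hA hH hzz hxxDD hyyDD hpxDD hpyDD hrel1
    have hrel3 : Rel n A H f (fun i => xx i + zz i) (u (j+1)) :=
      rel_congr (fun i => rfl) epy hrel2
    have hpxpos : ∀ i, 0 < xx i + zz i := by
      intro i
      have h1 := hlb j (le_of_lt hj) i
      rw [epx i]; linarith
    have hx'DD : DD n H (fun i => (xx i + zz i) + θ) := by
      intro i
      have h1 : (xx i + zz i) + θ = u j i := by rw [epx i]; ring
      dsimp only
      rw [h1]
      exact hDDu j (le_of_lt hj) i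
    have hstr := strictify hp hneu hn hA hH hθpos hpxDD
      (fun i => hDDu (j+1) hj i) hpxpos (fun i => hupos (j+1) hj i) hx'DD hrel3
    have e3 : ∀ i, (xx i + zz i) + θ = u j i := by
      intro i; rw [epx i]; ring
    constructor
    · exact rel_congr e3 (fun _ => rfl) hstr.1
    · intro hcon
      exact hstr.2 (rel_congr (fun _ => rfl) (fun i => (e3 i).symm) hcon)
  -- the heads
  set W : ℕ → Fin n → ℝ := fun j i => M + j*θ with hWdef
  have hWub : ∀ j, j ≤ n → ∀ i, W j i ≤ U := by
    intro j hj i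
    have hjn : (j:ℝ) ≤ n := by exact_mod_cast hj
    have h2 : (j:ℝ)*θ ≤ (n:ℝ)*θ := by nlinarith
    simp only [hWdef, hMdef]
    nlinarith
  have hWpos : ∀ j, ∀ i, 0 < W j i := by
    intro j i
    have : 0 ≤ (j:ℝ)*θ := mul_nonneg (by positivity) (le_of_lt hθpos)
    simp only [hWdef]
    linarith
  have hWDD : ∀ j, j ≤ n → DD n H (W j) :=
    fun j hj => mkDD hU (fun i => le_of_lt (hWpos j i)) (hWub j hj)
  have key : ∀ j, j < n → Rel n A H f (W j) (u (j+1)) ∧ ¬ Rel n A H f (u (j+1)) (W j) := by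
    intro j
    induction j with
    | zero =>
        intro hj
        have l0 := link 0 hj
        have e0 : ∀ i, u 0 i = W 0 i := by
          intro i
          simp only [hudef, hWdef, Finset.range_zero, Finset.sum_empty, Nat.cast_zero]
          ring
        exact ⟨rel_congr e0 (fun _ => rfl) l0.1,
          fun hcon => l0.2 (rel_congr (fun _ => rfl) (fun i => (e0 i).symm) hcon)⟩
    | succ j ih =>
        intro hj
        have hjn : j < n := by omega
        have ihj := ih hjn
        have lk := link (j+1) hj
        have hmid := chain_step hp hneu hn hA hH (hWDD j (by omega))
          (hDDu (j+1) (by omega)) (hDDu (j+2) (by omega)) (hWpos j)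
          ihj.1 ihj.2 lk.1 lk.2
        have hW'DD : DD n H (fun i => W j i + θ) := by
          intro i
          have e1 : W j i + θ = W (j+1) i := by
            simp only [hWdef]; push_cast; ring
          dsimp only
          rw [e1]
          exact hWDD (j+1) (by omega) i
        have hstr := strictify hp hneu hn hA hH hθpos (hWDD j (by omega))
          (hDDu (j+2) (by omega)) (hWpos j) (fun i => hupos (j+2) (by omega) i)
          hW'DD hmid
        have e1 : ∀ i, W j i + θ = W (j+1) i := by
          intro i; simp only [hWdef]; push_cast; ring
        exact ⟨rel_congr e1 (fun _ => rfl) hstr.1,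
          fun hcon => hstr.2 (rel_congr (fun _ => rfl) (fun i => (e1 i).symm) hcon)⟩
  -- the conclusion
  have hfin := (key (n-1) (by omega)).1
  have hn1 : n - 1 + 1 = n := by omega
  rw [hn1] at hfin
  have hsum : ∀ i : Fin n, ∑ k ∈ Finset.range n, d ((k : Fin n) + i) = ∑ j, d j := by
    intro i
    rw [← Fin.sum_univ_eq_sum_range (fun k => d ((k:Fin n) + i)) n]
    calc ∑ k : Fin n, d ((((k:ℕ)):Fin n) + i) = ∑ k : Fin n, d (k + i) := by
          apply Finset.sum_congr rfl
          intro k _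
          rw [Fin.cast_val_eq_self k]
      _ = ∑ j, d j := Fintype.sum_equiv (Equiv.addRight i) _ _ (fun k => rfl)
  have hdG : ∑ j, d j = G := by
    simp only [hddef, hGdef]
    rw [Finset.sum_sub_distrib]
  have hlt : ∀ i, W (n-1) i < u n i := by
    intro i
    have hun : u n i = M + G - n*θ := by
      simp only [hudef]
      rw [hsum i, hdG]
    have hWn : W (n-1) i = M + (n-1:ℝ)*θ := by
      simp only [hWdef]
      rw [Nat.cast_pred hn]
    rw [hun, hWn]
    have h2 : (2*(n:ℝ)-1)*θ ≤ (2*(n:ℝ)-1)*(G/(4*n)) := by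
      apply mul_le_mul_of_nonneg_left hθG
      have : (1:ℝ) ≤ n := by exact_mod_cast hn
      linarith
    have h3 : (2*(n:ℝ)-1)*(G/(4*n)) < G := by
      have h4 : (0:ℝ) < 4*n := by linarith
      rw [← mul_div_assoc, div_lt_iff₀ h4]
      nlinarith
    nlinarith
  exact par hp hneu hn hA hH (hWDD (n-1) (by omega)) (hDDu n (le_refl n)) hlt hfin

/-- one bisection step: shrink the disagreement while keeping a bad pair -/
lemma bisect_step (hp : ImplementsOn (HalfOpenDom n A H) f pp)
    (hneu : NeutralOn (HalfOpenDom n A H) f)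
    (hn : 0 < n) (hA : 3 ≤ Fintype.card A) (hH : (0:EReal) < H)
    {B κ U : ℝ} (hBU : B + κ ≤ U) (hU : (U:EReal) < H) (hκ : 0 < κ)
    {x y : Fin n → ℝ} {δ : ℝ} (h : Rel n A H f x y)
    (hxp : ∀ i, 0 < x i) (hyp : ∀ i, 0 < y i)
    (hbx : ∀ i, x i ≤ B) (hby : ∀ i, y i ≤ B)
    (hG : 0 < (∑ i, y i) - ∑ i, x i) (hδ : ∀ i, |y i - x i| ≤ δ) :
    ∃ x' y', Rel n A H f x' y' ∧ (∀ i, 0 < x' i) ∧ (∀ i, 0 < y' i) ∧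
      (∀ i, x' i ≤ B + κ) ∧ (∀ i, y' i ≤ B + κ) ∧
      0 < (∑ i, y' i) - ∑ i, x' i ∧ (∀ i, |y' i - x' i| ≤ (3/4)*δ) := by
  have hnR : (0:ℝ) < n := by exact_mod_cast hn
  set G := (∑ i, y i) - ∑ i, x i with hGdef
  have hGnδ : G ≤ n*δ := by
    have h1 : G = ∑ i, (y i - x i) := by rw [hGdef, Finset.sum_sub_distrib]
    calc G = ∑ i, (y i - x i) := h1
      _ ≤ ∑ i, |y i - x i| := Finset.sum_le_sum (fun i _ => le_abs_self _)
      _ ≤ ∑ _i : Fin n, δ := Finset.sum_le_sum (fun i _ => hδ i)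
      _ = n * δ := by
          rw [Finset.sum_const, Finset.card_univ, Fintype.card_fin, nsmul_eq_mul]
  have hδpos : 0 < δ := by nlinarith
  set θ := min (G/(8*n)) κ with hθdef
  have hθpos : 0 < θ := lt_min (div_pos hG (by linarith)) hκ
  have hθκ : θ ≤ κ := min_le_right _ _
  have hθG : θ ≤ G/(8*n) := min_le_left _ _
  have hθδ : θ ≤ δ/8 := by
    have h1 : G/(8*n) ≤ δ/8 := by
      rw [div_le_div_iff₀ (by linarith) (by norm_num)]
      nlinarith
    linarith
  have hBU' : B ≤ U := by linarith
  have hxDD : DD n H x := mkDD hU (fun i => le_of_lt (hxp i))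
    (fun i => le_trans (hbx i) hBU')
  have hyDD : DD n H y := mkDD hU (fun i => le_of_lt (hyp i))
    (fun i => le_trans (hby i) hBU')
  have hx'DD : DD n H (fun i => x i + θ) := mkDD hU
    (fun i => by have := hxp i; linarith)
    (fun i => by have := hbx i; linarith)
  have hstr := strictify hp hneu hn hA hH hθpos hxDD hyDD hxp hyp hx'DD h
  set z : Fin n → ℝ := fun i => (x i + y i)/2 with hzdef
  have hzp : ∀ i, 0 < z i := fun i => by
    have := hxp i; have := hyp i; simp only [hzdef]; linarith
  have hbz : ∀ i, z i ≤ B := fun i => by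
    have := hbx i; have := hby i; simp only [hzdef]; linarith
  have hzDD : DD n H z := mkDD hU (fun i => le_of_lt (hzp i))
    (fun i => le_trans (hbz i) hBU')
  have hx'p : ∀ i, 0 < x i + θ := fun i => by have := hxp i; linarith
  have hsz : ∑ i, z i = ((∑ i, x i) + ∑ i, y i)/2 := by
    simp only [hzdef]
    rw [← Finset.sum_div, Finset.sum_add_distrib]
  have hsx' : ∑ i, (x i + θ) = (∑ i, x i) + n*θ := by
    rw [Finset.sum_add_distrib, Finset.sum_const, Finset.card_univ,
      Fintype.card_fin, nsmul_eq_mul]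
  have hnθ : (n:ℝ)*θ ≤ G/8 := by
    have h1 : (n:ℝ)*θ ≤ (n:ℝ)*(G/(8*n)) := by nlinarith
    have h2 : (n:ℝ)*(G/(8*n)) = G/8 := by
      field_simp
    linarith
  rcases trichot hp hneu hn hA hH hx'DD hyDD hzDD hx'p with ⟨h1, h2⟩ | ⟨h1, h2⟩ | ⟨h1, h2⟩
  · -- winner x+θ : new pair (x+θ, z)
    refine ⟨(fun i => x i + θ), z, h2, hx'p, hzp, ?_, ?_, ?_, ?_⟩
    · intro i; have := hbx i; dsimp only; linarith
    · intro i; exact le_trans (hbz i) (by linarith)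
    · rw [hsz, hsx']
      nlinarith
    · intro i
      have hd := abs_le.mp (hδ i)
      rw [abs_le]
      constructor
      · simp only [hzdef]
        nlinarith
      · simp only [hzdef]
        nlinarith
  · exact absurd h1 hstr.2
  · -- winner z : new pair (z, y)
    refine ⟨z, y, h2, hzp, hyp, ?_, ?_, ?_, ?_⟩
    · intro i; exact le_trans (hbz i) (by linarith)
    · intro i; exact le_trans (hby i) (by linarith)
    · rw [hsz]
      nlinarith
    · intro i
      have hd := abs_le.mp (hδ i)
      rw [abs_le]
      constructor
      · simp only [hzdef]
        nlinarith
      · simp only [hzdef]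
        nlinarith

/-- iterated bisection -/
lemma bisect (hp : ImplementsOn (HalfOpenDom n A H) f pp)
    (hneu : NeutralOn (HalfOpenDom n A H) f)
    (hn : 0 < n) (hA : 3 ≤ Fintype.card A) (hH : (0:EReal) < H)
    {L ρ : ℝ} (hρ : 0 < ρ) (hLρU : ((L + ρ : ℝ):EReal) < H)
    {x0 y0 : Fin n → ℝ} {δ0 : ℝ} (h0 : Rel n A H f x0 y0)
    (hx0p : ∀ i, 0 < x0 i) (hy0p : ∀ i, 0 < y0 i)
    (hb0x : ∀ i, x0 i ≤ L) (hb0y : ∀ i, y0 i ≤ L)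
    (hG0 : 0 < (∑ i, y0 i) - ∑ i, x0 i) (hδ0 : ∀ i, |y0 i - x0 i| ≤ δ0) :
    ∀ k : ℕ, ∃ x y, Rel n A H f x y ∧ (∀ i, 0 < x i) ∧ (∀ i, 0 < y i) ∧
      (∀ i, x i ≤ L + ρ/2*(1 - (1/2:ℝ)^k)) ∧ (∀ i, y i ≤ L + ρ/2*(1 - (1/2:ℝ)^k)) ∧
      0 < (∑ i, y i) - ∑ i, x i ∧ (∀ i, |y i - x i| ≤ δ0 * (3/4:ℝ)^k) := by
  intro k
  induction k with
  | zero =>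
      refine ⟨x0, y0, h0, hx0p, hy0p, ?_, ?_, hG0, ?_⟩
      · intro i; have := hb0x i; simp only [pow_zero]; linarith
      · intro i; have := hb0y i; simp only [pow_zero]; linarith
      · intro i; have := hδ0 i; simp only [pow_zero]; linarith
  | succ k ih =>
      obtain ⟨x, y, hR, hxp, hyp, hbx, hby, hG, hδ⟩ := ih
      set B := L + ρ/2*(1 - (1/2:ℝ)^k) with hBdef
      set κ := ρ/2*((1/2:ℝ)^(k+1)) with hκdef
      have hκpos : 0 < κ := by positivity
      have hpow : ((1/2:ℝ))^(k+1) = (1/2)^k * (1/2) := pow_succ _ _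
      have hBκ : B + κ = L + ρ/2*(1 - (1/2:ℝ)^(k+1)) := by
        simp only [hBdef, hκdef, hpow]
        ring
      have hBU : B + κ ≤ L + ρ := by
        rw [hBκ]
        have ht : 0 ≤ (1/2:ℝ)^(k+1) := by positivity
        have ht1 : (1/2:ℝ)^(k+1) ≤ 1 := by
          apply pow_le_one₀ <;> norm_num
        nlinarith
      obtain ⟨x', y', hR', hx'p, hy'p, hbx', hby', hG', hδ'⟩ :=
        bisect_step hp hneu hn hA hH hBU hLρU hκpos hR hxp hyp hbx hby hG hδ
      refine ⟨x', y', hR', hx'p, hy'p, ?_, ?_, hG', ?_⟩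
      · intro i; rw [← hBκ]; exact hbx' i
      · intro i; rw [← hBκ]; exact hby' i
      · intro i
        have := hδ' i
        calc |y' i - x' i| ≤ (3/4)*(δ0*(3/4:ℝ)^k) := this
          _ = δ0 * (3/4:ℝ)^(k+1) := by rw [pow_succ]; ring

end Roberts

set_option maxHeartbeats 2000000 in
open Roberts in
/-- on `𝕋ⁿ = [0,H)^{m×n}`, every implementable, neutral and anonymous
social choice function is the efficient one: `f t` maximizes `∑ i, t a i` over `a`. -/
theorem implementable_neutral_anonymous_efficient
    {n : ℕ} {A : Type*} [Fintype A] [DecidableEq A]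
    (hn : 0 < n) (hA : 3 ≤ Fintype.card A)
    (H : EReal) (hH : 0 < H)
    (f : Profile n A → A)
    (hf : ImplementableOn (HalfOpenDom n A H) f)
    (hneu : NeutralOn (HalfOpenDom n A H) f)
    (hanon : AnonymousOn (HalfOpenDom n A H) f) :
    ∀ t ∈ HalfOpenDom n A H, ∀ b : A, ∑ i, t b i ≤ ∑ i, t (f t) i := by
  classical
  obtain ⟨p, hp⟩ := hf
  intro t ht b
  by_contra hlt
  push_neg at hlt
  set a := f t with hadef
  have hb : b ≠ a := by
    intro h; rw [h] at hlt; exact lt_irrefl _ hlt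
  have hnR : (0:ℝ) < n := by exact_mod_cast hn
  have hmax : ∀ i, ((max (t a i) (t b i) : ℝ) : EReal) < H := by
    intro i
    rcases max_cases (t a i) (t b i) with ⟨h1, _⟩ | ⟨h1, _⟩ <;> rw [h1]
    · exact (ht a i).2
    · exact (ht b i).2
  obtain ⟨θR, hθR, hroomR⟩ := roomLemma hn hH (fun i => max (t a i) (t b i)) hmax
  set G00 := (∑ i, t b i) - ∑ i, t a i with hG00
  have hG00pos : 0 < G00 := by rw [hG00]; linarith
  set θ0 := min θR (G00/n) with hθ0def
  have hθ0pos : 0 < θ0 := lt_min hθR (div_pos hG00pos hnR)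
  have hθ0R : θ0 ≤ θR := min_le_left _ _
  have hθ0G : θ0 ≤ G00/n := min_le_right _ _
  set x0 : Fin n → ℝ := fun i => t a i + θ0 with hx0def
  set y0 : Fin n → ℝ := fun i => t b i + θ0/2 with hy0def
  have hx0DD : DD n H x0 := by
    intro i
    constructor
    · have := (ht a i).1; simp only [hx0def]; linarith
    · simp only [hx0def]
      have h1 : t a i + θ0 ≤ max (t a i) (t b i) + θR := by
        have := le_max_left (t a i) (t b i); linarith
      exact lt_of_le_of_lt (by exact_mod_cast h1) (hroomR i)
  have hy0DD : DD n H y0 := by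
    intro i
    constructor
    · have := (ht b i).1; simp only [hy0def]; linarith
    · simp only [hy0def]
      have h1 : t b i + θ0/2 ≤ max (t a i) (t b i) + θR := by
        have := le_max_right (t a i) (t b i); linarith
      exact lt_of_le_of_lt (by exact_mod_cast h1) (hroomR i)
  have hq : qq x0 y0 a b ∈ HalfOpenDom n A H := qq_mem hH hx0DD hy0DD
  have hfm : f t ∈ ChoiceSetOn (HalfOpenDom n A H) f t := f_mem hp ht
  rw [← hadef] at hfm
  have hforce : f (qq x0 y0 a b) = a := by
    refine force hp hn hA hH ht hq hfm ?_
    intro i c hc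
    have hqa : qq x0 y0 a b a i - t a i = θ0 := by
      rw [qq_a]; simp only [hx0def]; ring
    rw [hqa]
    by_cases hcb : c = b
    · rw [hcb, qq_b hb]
      simp only [hy0def]
      linarith
    · rw [qq_o hc hcb]
      have := (ht c i).1
      linarith
  have hmem : a ∈ ChoiceSetOn (HalfOpenDom n A H) f (qq x0 y0 a b) := by
    have := f_mem hp hq
    rwa [hforce] at this
  have hRel : Rel n A H f x0 y0 := ⟨a, b, Ne.symm hb, hmem⟩
  have hx0p : ∀ i, 0 < x0 i := fun i => by
    have := (ht a i).1; simp only [hx0def]; linarith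
  have hy0p : ∀ i, 0 < y0 i := fun i => by
    have := (ht b i).1; simp only [hy0def]; linarith
  have hsx0 : ∑ i, x0 i = (∑ i, t a i) + n*θ0 := by
    simp only [hx0def]
    rw [Finset.sum_add_distrib, Finset.sum_const, Finset.card_univ,
      Fintype.card_fin, nsmul_eq_mul]
  have hsy0 : ∑ i, y0 i = (∑ i, t b i) + n*(θ0/2) := by
    simp only [hy0def]
    rw [Finset.sum_add_distrib, Finset.sum_const, Finset.card_univ,
      Fintype.card_fin, nsmul_eq_mul]
  have hgap : 0 < (∑ i, y0 i) - ∑ i, x0 i := by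
    rw [hsx0, hsy0]
    have h1 : (n:ℝ)*θ0 ≤ G00 := by
      have h2 : (n:ℝ)*θ0 ≤ (n:ℝ)*(G00/n) := by nlinarith
      have h3 : (n:ℝ)*(G00/n) = G00 := by field_simp
      linarith
    rw [hG00] at h1
    nlinarith
  have hneF : (Finset.univ : Finset (Fin n)).Nonempty := ⟨⟨0, hn⟩, Finset.mem_univ _⟩
  set L0 := Finset.univ.sup' hneF (fun i => max (x0 i) (y0 i)) with hL0def
  have hsup : ∀ i, max (x0 i) (y0 i) ≤ L0 := by
    intro i
    rw [hL0def]
    exact Finset.le_sup' (fun j => max (x0 j) (y0 j)) (Finset.mem_univ i)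
  have hbx0 : ∀ i, x0 i ≤ L0 := fun i => le_trans (le_max_left _ _) (hsup i)
  have hby0 : ∀ i, y0 i ≤ L0 := fun i => le_trans (le_max_right _ _) (hsup i)
  have hL0pos : 0 < L0 := lt_of_lt_of_le (hx0p ⟨0, hn⟩) (hbx0 ⟨0, hn⟩)
  have hL0H : (L0 : EReal) < H := by
    obtain ⟨i, _, hi⟩ := Finset.exists_mem_eq_sup' hneF (fun i => max (x0 i) (y0 i))
    rw [hL0def, hi]
    rcases max_cases (x0 i) (y0 i) with ⟨h1, _⟩ | ⟨h1, _⟩ <;> rw [h1]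
    · exact (hx0DD i).2
    · exact (hy0DD i).2
  obtain ⟨ρ, hρpos, hρH⟩ := roomLemma hn hH (fun _ => L0) (fun _ => hL0H)
  have hUH : ((L0 + ρ : ℝ) : EReal) < H := hρH ⟨0, hn⟩
  set δ0 := (∑ i, |y0 i - x0 i|) + 1 with hδ0def
  have habs_nonneg : (0:ℝ) ≤ ∑ i, |y0 i - x0 i| :=
    Finset.sum_nonneg (fun i _ => abs_nonneg _)
  have hδ0pos : 0 < δ0 := by rw [hδ0def]; linarith
  have hδ0 : ∀ i, |y0 i - x0 i| ≤ δ0 := by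
    intro i
    have h1 : |y0 i - x0 i| ≤ ∑ j, |y0 j - x0 j| :=
      Finset.single_le_sum (f := fun j => |y0 j - x0 j|)
        (fun j _ => abs_nonneg _) (Finset.mem_univ i)
    rw [hδ0def]; linarith
  have h3n : (0:ℝ) < 3*(n:ℝ)+2 := by linarith
  have htarget : (0:ℝ) < ρ/(2*(3*(n:ℝ)+2)) := by positivity
  obtain ⟨k, hk⟩ := exists_pow_lt_of_lt_one
    (show (0:ℝ) < ρ/(2*(3*(n:ℝ)+2))/δ0 by positivity) (show (3/4:ℝ) < 1 by norm_num)
  have hδk : δ0 * (3/4:ℝ)^k ≤ ρ/(2*(3*(n:ℝ)+2)) := by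
    have h2 := (lt_div_iff₀ hδ0pos).mp hk
    nlinarith
  obtain ⟨xs, ys, hRs, hxsp, hysp, hbxs, hbys, hGs, hδs⟩ :=
    bisect hp hneu hn hA hH hρpos hUH hRel hx0p hy0p hbx0 hby0 hgap hδ0 k
  have hpowpos : (0:ℝ) < (3/4:ℝ)^k := by positivity
  have hpow2 : (0:ℝ) ≤ (1/2:ℝ)^k := by positivity
  refine chain hp hneu hanon hn hA hH (U := L0 + ρ) hUH
    (L := L0 + ρ/2) (by linarith) hRs hxsp hysp
    (fun i => le_trans (hbxs i) (by nlinarith))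
    (fun i => le_trans (hbys i) (by nlinarith))
    hδs (by positivity) hGs ?_
  have h4 : (3*(n:ℝ)+2)*(δ0*(3/4:ℝ)^k) ≤ (3*(n:ℝ)+2)*(ρ/(2*(3*(n:ℝ)+2))) :=
    mul_le_mul_of_nonneg_left hδk (le_of_lt h3n)
  have h5 : (3*(n:ℝ)+2)*(ρ/(2*(3*(n:ℝ)+2))) = ρ/2 := by
    field_simp
  linarith
end

section
/- Suppose 𝕋ⁿ = ℝ^{m×n}, f is implementable and satisfies non-imposition. Let t be a type profile such that C^f(t) = {a} for some a ∈ A. Then there exists ε ∈ ℝⁿ with ε ≫ 0 such that a ∈ C^f(s), where s is the profile with s^a = t^a − ε and s^b = t^b for all b ≠ a. -/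
open Function

lemma step_lemma {n : ℕ} {A : Type*} {f : Profile n A → A} {p}
    (hfp : Implements f p) {t s : Profile n A} {i : Fin n} {a : A}
    (hrow : ∀ j : Fin n, j ≠ i → ∀ b : A, s b j = t b j)
    (hdom : ∀ b : A, b ≠ a → s a i - s b i > t a i - t b i)
    (hft : f t = a) : f s = a := by
  by_contra hb
  have h1 := hfp t s i hrow
  have h2 := hfp s t i (fun j hj b => (hrow j hj b).symm)
  have hd := hdom (f s) hb
  rw [hft] at h1 h2
  linarith

lemma multi_step {n : ℕ} {A : Type*} {f : Profile n A → A} {p}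
    (hfp : Implements f p) {t s : Profile n A} {a : A}
    (hdom : ∀ i : Fin n, ∀ b : A, b ≠ a → s a i - s b i > t a i - t b i)
    (hft : f t = a) : f s = a := by
  let r : ℕ → Profile n A := fun k b i => if (i : ℕ) < k then s b i else t b i
  have key : ∀ k : ℕ, f (r k) = a := by
    intro k
    induction k with
    | zero =>
      have h0 : r 0 = t := by funext b i; simp [r]
      rwa [h0]
    | succ k ih =>
      by_cases hk : k < n
      · refine step_lemma hfp (i := ⟨k, hk⟩) ?_ ?_ ih
        · intro j hj b
          have : (j : ℕ) ≠ k := fun h => hj (Fin.ext h)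
          simp only [r]
          rcases lt_or_ge (j : ℕ) k with h | h
          · rw [if_pos h, if_pos (Nat.lt_succ_of_lt h)]
          · have h' : ¬ (j : ℕ) < k := not_lt.mpr h
            have h'' : ¬ (j : ℕ) < k + 1 := by omega
            rw [if_neg h', if_neg h'']
        · intro b hb
          have ha1 : r (k+1) a ⟨k, hk⟩ = s a ⟨k, hk⟩ := by simp [r]
          have ha2 : r (k+1) b ⟨k, hk⟩ = s b ⟨k, hk⟩ := by simp [r]
          have ha3 : r k a ⟨k, hk⟩ = t a ⟨k, hk⟩ := by simp [r]
          have ha4 : r k b ⟨k, hk⟩ = t b ⟨k, hk⟩ := by simp [r]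
          rw [ha1, ha2, ha3, ha4]
          exact hdom _ b hb
      · have : r (k+1) = r k := by
          funext b i
          have hi : (i : ℕ) < k := lt_of_lt_of_le i.isLt (not_lt.mp hk)
          simp [r, hi, Nat.lt_succ_of_lt hi]
        rw [this]; exact ih
  have hs : r n = s := by
    funext b i
    simp [r, i.isLt]
  rw [← hs]; exact key n

lemma fmem {n : ℕ} {A : Type*} [DecidableEq A] {f : Profile n A → A} {p}
    (hfp : Implements f p) (t : Profile n A) : f t ∈ ChoiceSet f t := by
  intro ε hε
  refine multi_step hfp ?_ rfl
  intro i b hb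
  rw [Function.update_self, Function.update_of_ne hb]
  have := hε i
  simp only [Pi.add_apply]
  linarith

lemma choice_shift {n : ℕ} {A : Type*} [Fintype A] [DecidableEq A]
    {f : Profile n A → A} {p} (hfp : Implements f p)
    {t s : Profile n A} {a : A} (hex : ∃ b : A, b ≠ a)
    (ha : a ∈ ChoiceSet f t)
    (hdom : ∀ i : Fin n, ∀ b : A, b ≠ a → s a i - s b i > t a i - t b i) :
    f s = a := by
  obtain ⟨b0, hb0⟩ := hex
  have hne : (Finset.univ.erase a).Nonempty :=
    ⟨b0, Finset.mem_erase.mpr ⟨hb0, Finset.mem_univ _⟩⟩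
  set η : Fin n → ℝ := fun i =>
    (1/2) * (Finset.univ.erase a).inf' hne (fun b => s a i - s b i - (t a i - t b i)) with hη
  have hinfpos : ∀ i, 0 < (Finset.univ.erase a).inf' hne
      (fun b => s a i - s b i - (t a i - t b i)) := by
    intro i
    rw [Finset.lt_inf'_iff]
    intro b hb
    have := hdom i b (Finset.mem_erase.mp hb).1
    linarith
  have hηpos : ∀ i, 0 < η i := fun i => by
    have := hinfpos i; rw [hη]; positivity
  have hft' : f (Function.update t a (t a + η)) = a := ha η hηpos
  refine multi_step hfp ?_ hft'
  intro i b hb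
  rw [Function.update_self, Function.update_of_ne hb]
  have hle : (Finset.univ.erase a).inf' hne (fun b => s a i - s b i - (t a i - t b i))
      ≤ s a i - s b i - (t a i - t b i) :=
    Finset.inf'_le _ (Finset.mem_erase.mpr ⟨hb, Finset.mem_univ _⟩)
  have := hinfpos i
  simp only [Pi.add_apply]
  have : η i < s a i - s b i - (t a i - t b i) := by
    rw [hη]; dsimp only; linarith
  linarith

/-- if `C^f(t) = {a}`, then for some `ε ≫ 0`, `a` remains in the
choice set after lowering the column of `a` by `ε`. -/
theorem singleton_choiceSet_lower
    {n : ℕ} {A : Type*} [Fintype A] [DecidableEq A]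
    (hn : 0 < n) (hA : 3 ≤ Fintype.card A)
    (f : Profile n A → A)
    (hf : Implementable f) (hni : NonImposition f)
    (t : Profile n A) (a : A) (ht : ChoiceSet f t = {a}) :
    ∃ ε : Fin n → ℝ, (∀ i, 0 < ε i) ∧
      a ∈ ChoiceSet f (Function.update t a (t a - ε)) := by
  obtain ⟨p, hfp⟩ := hf
  by_contra hcon
  push_neg at hcon
  -- For every k, there is an outcome b ≠ a at a profile where column a is
  -- shifted by x with x i > -(1/(k+1)).
  have H : ∀ k : ℕ, ∃ b : A, b ≠ a ∧ ∃ x : Fin n → ℝ,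
      (∀ i, -(1/(k+1) : ℝ) < x i) ∧ f (Function.update t a (t a + x)) = b := by
    intro k
    set ε0 : Fin n → ℝ := fun _ => 1/(k+1) with hε0
    have hεpos : ∀ i : Fin n, 0 < ε0 i := by
      intro i; rw [hε0]; positivity
    have hmem := hcon ε0 hεpos
    simp only [ChoiceSet, Set.mem_setOf_eq, not_forall] at hmem
    obtain ⟨δ, hδ, hne⟩ := hmem
    push_neg at hne
    set x : Fin n → ℝ := fun i => δ i - 1/(k+1) with hx
    have hprof : Function.update (Function.update t a (t a - ε0)) a
        ((Function.update t a (t a - ε0)) a + δ)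
        = Function.update t a (t a + x) := by
      rw [Function.update_self, Function.update_idem]
      have hveq : (t a - ε0) + δ = t a + x := by
        funext i
        simp only [Pi.add_apply, Pi.sub_apply, hx, hε0]
        ring
      rw [hveq]
    rw [hprof] at hne
    exact ⟨f (Function.update t a (t a + x)), hne, x, fun i => by
      have := hδ i; simp [hx, hε0]; linarith, rfl⟩
  choose b hbne x hxlb hfx using H
  -- pigeonhole: some value y of b occurs for infinitely many k
  obtain ⟨y, hy⟩ := Finite.exists_infinite_fiber b
  have hyinf : (b ⁻¹' {y}).Infinite := Set.infinite_coe_iff.mp hy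
  have hyne : y ≠ a := by
    obtain ⟨k, hk⟩ := hyinf.nonempty
    have : b k = y := hk
    rw [← this]; exact hbne k
  -- show y ∈ ChoiceSet f t
  have hyC : y ∈ ChoiceSet f t := by
    intro δ' hδ'
    -- choose k in the fiber with 1/(k+1) < min δ'
    have hnn : (Finset.univ : Finset (Fin n)).Nonempty := by
      exact Finset.univ_nonempty_iff.mpr (Fin.pos_iff_nonempty.mp hn)
    set m := Finset.univ.inf' hnn δ' with hm
    have hmpos : 0 < m := by
      rw [hm, Finset.lt_inf'_iff]
      intro i _; exact hδ' i
    obtain ⟨k0, hk0⟩ := exists_nat_one_div_lt hmpos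
    obtain ⟨k, hkmem, hkgt⟩ := hyinf.exists_gt k0
    have hbk : b k = y := hkmem
    have hsmall : ∀ i : Fin n, (1/(k+1) : ℝ) < δ' i := by
      intro i
      have h1 : (1/(k+1) : ℝ) ≤ 1/(k0+1) := by
        apply one_div_le_one_div_of_le
        · positivity
        · have : (k0:ℝ) ≤ k := by exact_mod_cast le_of_lt hkgt
          linarith
      have h2 : m ≤ δ' i := Finset.inf'_le _ (Finset.mem_univ i)
      calc (1/(k+1) : ℝ) ≤ 1/(k0+1) := h1
        _ < m := hk0
        _ ≤ δ' i := h2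
    -- y ∈ ChoiceSet f r where r = update t a (t a + x k)
    have hyCr : y ∈ ChoiceSet f (Function.update t a (t a + x k)) := by
      have := fmem hfp (Function.update t a (t a + x k))
      rwa [hfx k, hbk] at this
    refine choice_shift hfp ⟨a, hyne.symm⟩ hyCr ?_
    intro i c hc
    rw [Function.update_self, Function.update_of_ne hc]
    by_cases hca : c = a
    · subst hca
      rw [Function.update_of_ne hyne, Function.update_self]
      simp only [Pi.add_apply]
      have h1 := hxlb k i
      have h2 := hsmall i
      linarith
    · rw [Function.update_of_ne hyne, Function.update_of_ne hca]
      simp only [Pi.add_apply]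
      have := hδ' i
      linarith
  rw [ht] at hyC
  exact hyne hyC
end

section
/- (Neutrality via P-sets) Suppose 𝕋ⁿ = ℝ^{m×n} and f is an implementable social choice function. Then f is neutral if and only if P^f(a,b) = P^f(c,d) for all alternatives a, b, c, d ∈ A with a ≠ b and c ≠ d. -/
open Function

section Aux

variable {n : ℕ} {A : Type*} [Fintype A] [DecidableEq A]
  {f : Profile n A → A} {p : Profile n A → Fin n → ℝ}

/-- Weak monotonicity (2-cycle condition) for each agent. -/
lemma wmon_aux (hp : Implements f p) (t s : Profile n A) (i : Fin n)
    (h : ∀ j : Fin n, j ≠ i → ∀ a : A, s a j = t a j) :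
    t (f t) i - t (f s) i ≥ s (f t) i - s (f s) i := by
  have h1 := hp t s i h
  have h2 := hp s t i (fun j hj a => (h j hj a).symm)
  linarith

/-- Positive association (Roberts' PAD): if the chosen alternative's column rises
strictly more than every other column (agent by agent), the choice is unchanged. -/
lemma pad_aux (hp : Implements f p) (t s : Profile n A)
    (h : ∀ b, b ≠ f t → ∀ i, s (f t) i - t (f t) i > s b i - t b i) :
    f s = f t := by
  have key : ∀ k : ℕ, k ≤ n →
      f (fun b (i : Fin n) => if (i : ℕ) < k then s b i else t b i) = f t := by
    intro k
    induction k with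
    | zero =>
      intro _
      have : (fun b (i : Fin n) => if (i : ℕ) < 0 then s b i else t b i) = t := by
        funext b i; simp
      rw [this]
    | succ k ih =>
      intro hk
      have hkn : k < n := hk
      have ihk := ih (le_of_lt hkn)
      set u : Profile n A := fun b (i : Fin n) => if (i : ℕ) < k then s b i else t b i with hu
      set v : Profile n A := fun b (i : Fin n) => if (i : ℕ) < k + 1 then s b i else t b i with hv
      have hdiff : ∀ j : Fin n, j ≠ ⟨k, hkn⟩ → ∀ b : A, v b j = u b j := by
        intro j hj b
        simp only [hu, hv]
        rcases lt_or_ge (j : ℕ) k with h' | h'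
        · rw [if_pos h', if_pos (Nat.lt_succ_of_lt h')]
        · have hne : (j : ℕ) ≠ k := fun hh => hj (Fin.ext hh)
          have h1 : ¬ (j : ℕ) < k := not_lt.mpr h'
          have h2 : ¬ (j : ℕ) < k + 1 := by omega
          rw [if_neg h1, if_neg h2]
      show f v = f t
      by_contra hne
      have hw := wmon_aux hp u v ⟨k, hkn⟩ hdiff
      rw [ihk] at hw
      have eu : ∀ b : A, u b ⟨k, hkn⟩ = t b ⟨k, hkn⟩ := by
        intro b; simp [hu]
      have ev : ∀ b : A, v b ⟨k, hkn⟩ = s b ⟨k, hkn⟩ := by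
        intro b; simp [hv]
      have hstrict := h (f v) (fun hh => hne hh) ⟨k, hkn⟩
      rw [eu, eu, ev, ev] at hw
      linarith
  have hs : (fun b (i : Fin n) => if (i : ℕ) < n then s b i else t b i) = s := by
    funext b i; rw [if_pos i.isLt]
  have := key n le_rfl
  rwa [hs] at this

/-- The actually chosen alternative lies in the choice set. -/
lemma f_mem_choice (hp : Implements f p) (t : Profile n A) :
    f t ∈ ChoiceSet f t := by
  intro ε hε
  apply pad_aux hp t
  intro b hb i
  rw [Function.update_self, Function.update_of_ne hb]
  simpa using hε i

/-- Lifting lemma: if `a ∈ C(t)` and at `s` the advantage of `a` over every other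
alternative is strictly larger than at `t` (agent by agent), then `f s = a`. -/
lemma lift_aux (hp : Implements f p) {a : A} {t : Profile n A}
    (ha : a ∈ ChoiceSet f t) (hex : ∃ b : A, b ≠ a) (s : Profile n A)
    (h : ∀ x, x ≠ a → ∀ i, s a i - s x i > t a i - t x i) : f s = a := by
  obtain ⟨b0, hb0⟩ := hex
  have hne : (Finset.univ.erase a).Nonempty :=
    ⟨b0, Finset.mem_erase.mpr ⟨hb0, Finset.mem_univ b0⟩⟩
  set ε : Fin n → ℝ := fun i =>
    ((Finset.univ.erase a).inf' hne (fun x => s a i - s x i - (t a i - t x i))) / 2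
    with hεdef
  have hεpos : ∀ i, 0 < ε i := by
    intro i
    apply div_pos _ two_pos
    rw [Finset.lt_inf'_iff]
    intro x hx
    have hxa : x ≠ a := (Finset.mem_erase.mp hx).1
    have := h x hxa i
    linarith
  have hft : f (Function.update t a (t a + ε)) = a := ha ε hεpos
  rw [← hft]
  apply pad_aux hp
  intro b hb i
  rw [hft] at hb ⊢
  rw [Function.update_self, Function.update_of_ne hb]
  have hmem : b ∈ Finset.univ.erase a := Finset.mem_erase.mpr ⟨hb, Finset.mem_univ b⟩
  have hle : (Finset.univ.erase a).inf' hne (fun x => s a i - s x i - (t a i - t x i))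
      ≤ s a i - s b i - (t a i - t b i) := Finset.inf'_le _ hmem
  have hpos := h b hb i
  simp only [Pi.add_apply]
  have : ε i < s a i - s b i - (t a i - t b i) := by
    rw [hεdef]; dsimp only; linarith
  linarith

/-- Incompatibility: one cannot have `a ∈ C(s)`, `c ∈ C(r)` with
`r^c - r^a ≪ -(s^a - s^c)`. -/
lemma incompat_aux (hp : Implements f p) {a c : A} (hac : a ≠ c)
    {s r : Profile n A} (ha : a ∈ ChoiceSet f s) (hc : c ∈ ChoiceSet f r)
    (hex : ∃ x : A, x ≠ a) (hex' : ∃ x : A, x ≠ c)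
    {ε : Fin n → ℝ} (hε : ∀ i, 0 < ε i)
    (hdiff : ∀ i, r c i - r a i = -(s a i - s c i) - ε i) : False := by
  set v : Profile n A := fun x i =>
    if x = a then s a i - s c i + ε i / 2
    else if x = c then 0
    else min (s a i - s c i + ε i / 2 - (s a i - s x i)) (-(r c i - r x i)) - 1
    with hv
  have hva : ∀ i, v a i = s a i - s c i + ε i / 2 := by intro i; simp [hv]
  have hvc : ∀ i, v c i = 0 := by intro i; simp [hv, Ne.symm hac]
  have hvx : ∀ x, x ≠ a → x ≠ c → ∀ i,
      v x i = min (s a i - s c i + ε i / 2 - (s a i - s x i)) (-(r c i - r x i)) - 1 := by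
    intro x hxa hxc i; simp [hv, hxa, hxc]
  have h1 : f v = a := by
    apply lift_aux hp ha hex v
    intro x hxa i
    by_cases hxc : x = c
    · subst hxc
      rw [hva, hvc]
      have := hε i
      linarith
    · rw [hva, hvx x hxa hxc]
      have hle := min_le_left (s a i - s c i + ε i / 2 - (s a i - s x i)) (-(r c i - r x i))
      linarith
  have h2 : f v = c := by
    apply lift_aux hp hc hex' v
    intro x hxc i
    by_cases hxa : x = a
    · subst hxa
      rw [hvc, hva, hdiff i]
      have := hε i
      linarith
    · rw [hvc, hvx x hxa hxc]
      have hle := min_le_right (s a i - s c i + ε i / 2 - (s a i - s x i)) (-(r c i - r x i))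
      linarith
  exact hac (h1.symm.trans h2)

/-- Key lemma: if all P-sets coincide, then permuting columns moves the choice set along. -/
lemma perm_mem_aux (hp : Implements f p) (hA : 3 ≤ Fintype.card A)
    (hP : ∀ a b c d : A, a ≠ b → c ≠ d → RPSet f a b = RPSet f c d)
    {t : Profile n A} {a : A} (ha : a ∈ ChoiceSet f t) (ρ : Equiv.Perm A) :
    ρ a ∈ ChoiceSet f (fun b => t (ρ.symm b)) := by
  have hcard1 : 1 < Fintype.card A := by omega
  intro ε hε
  set s : Profile n A := fun b => t (ρ.symm b) with hs
  set s' : Profile n A := Function.update s (ρ a) (s (ρ a) + ε) with hs'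
  by_contra hne
  have hcmem : f s' ∈ ChoiceSet f s' := f_mem_choice hp s'
  set c := f s' with hcdef
  have hcne : c ≠ ρ a := hne
  set b := ρ.symm c with hb
  have hba : b ≠ a := by
    intro hh
    apply hcne
    rw [hb] at hh
    rw [← hh, Equiv.apply_symm_apply]
  have mem1 : s' c - s' (ρ a) ∈ RPSet f c (ρ a) := ⟨s', hcmem, rfl⟩
  rw [hP c (ρ a) b a hcne hba] at mem1
  obtain ⟨r, hrb, hr⟩ := mem1
  have hsc : s' c = t b := by
    rw [hs', Function.update_of_ne hcne, hs]
  have hsa : s' (ρ a) = t a + ε := by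
    rw [hs', Function.update_self, hs]
    simp
  have hdiff : ∀ i, r b i - r a i = -(t a i - t b i) - ε i := by
    intro i
    have := congrFun hr i
    simp only [Pi.sub_apply] at this
    rw [this, hsc, hsa]
    simp only [Pi.sub_apply, Pi.add_apply]
    ring
  exact incompat_aux hp (Ne.symm hba) ha hrb
    (Fintype.exists_ne_of_one_lt_card hcard1 a)
    (Fintype.exists_ne_of_one_lt_card hcard1 b) hε hdiff

/-- Easy direction: neutrality forces all P-sets (for distinct pairs) to coincide. -/
lemma psubset_aux (hN : Neutral f) {a b c d : A} (hab : a ≠ b) (hcd : c ≠ d) :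
    RPSet f a b ⊆ RPSet f c d := by
  rintro α ⟨t, hat, hα⟩
  set σ : Equiv.Perm A := (Equiv.swap a c).trans (Equiv.swap ((Equiv.swap a c) b) d) with hσ
  have hσa : σ a = c := by
    rw [hσ]
    simp only [Equiv.trans_apply, Equiv.swap_apply_left]
    apply Equiv.swap_apply_of_ne_of_ne
    · intro hh
      apply hab
      have h2 := congrArg (Equiv.swap a c) hh
      rw [Equiv.swap_apply_right, Equiv.swap_apply_self] at h2
      exact h2
    · exact hcd
  have hσb : σ b = d := by
    rw [hσ]
    simp only [Equiv.trans_apply, Equiv.swap_apply_left]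
  have hkey := hN t σ
  refine ⟨fun x => t (σ.symm x), ?_, ?_⟩
  · rw [hkey]
    exact ⟨a, hat, hσa⟩
  · have e1 : σ.symm c = a := by rw [← hσa, Equiv.symm_apply_apply]
    have e2 : σ.symm d = b := by rw [← hσb, Equiv.symm_apply_apply]
    show t (σ.symm c) - t (σ.symm d) = α
    rw [e1, e2, hα]

end Aux

/-- Neutrality via P-sets: an implementable `f` on `𝕋ⁿ = ℝ^{m×n}`
is neutral iff all its `P`-sets (over pairs of distinct alternatives) coincide. -/
theorem neutral_iff_psets_equal
    {n : ℕ} {A : Type*} [Fintype A] [DecidableEq A]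
    (hn : 0 < n) (hA : 3 ≤ Fintype.card A)
    (f : Profile n A → A)
    (hf : Implementable f) :
    Neutral f ↔ ∀ a b c d : A, a ≠ b → c ≠ d → RPSet f a b = RPSet f c d := by
  obtain ⟨p, hp⟩ := hf
  constructor
  · intro hN a b c d hab hcd
    exact Set.Subset.antisymm (psubset_aux hN hab hcd) (psubset_aux hN hcd hab)
  · intro hP t ρ
    ext x
    constructor
    · intro hx
      refine ⟨ρ.symm x, ?_, Equiv.apply_symm_apply ρ x⟩
      have := perm_mem_aux hp hA hP hx ρ.symm
      have heq : (fun b => (fun b' => t (ρ.symm b')) (ρ.symm.symm b)) = t := by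
        funext b; simp
      rwa [heq] at this
    · rintro ⟨a, hat, rfl⟩
      exact perm_mem_aux hp hA hP hat ρ
end

section
/- Suppose 𝕋ⁿ = ℝ^{m×n}, f is implementable and satisfies non-imposition. For all a, b ∈ A with a ≠ b: if (β − ε) ∈ P^f(a,b) for some β ∈ ℝⁿ and some ε ∈ ℝⁿ with ε ≫ 0, then −β ∉ P^f(b,a). -/
open Function

lemma weak_mono {n : ℕ} {A : Type*} {f : Profile n A → A} {p : Profile n A → Fin n → ℝ}
    (hp : Implements f p) (u v : Profile n A) (i : Fin n)
    (hagree : ∀ j : Fin n, j ≠ i → ∀ x : A, v x j = u x j) :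
    v (f u) i - v (f v) i ≤ u (f u) i - u (f v) i := by
  have h1 := hp u v i hagree
  have h2 := hp v u i (fun j hj x => (hagree j hj x).symm)
  linarith

lemma stays {n : ℕ} {A : Type*} {f : Profile n A → A} {p : Profile n A → Fin n → ℝ}
    (hp : Implements f p) (a : A) (t s : Profile n A)
    (hst : ∀ x : A, x ≠ a → ∀ i, t a i - t x i < s a i - s x i)
    (hft : f t = a) : f s = a := by
  have key : ∀ k : ℕ, k ≤ n → f (fun x i => if i.val < k then s x i else t x i) = a := by
    intro k
    induction k with
    | zero =>
      intro _
      have he : (fun (x : A) (i : Fin n) => if i.val < 0 then s x i else t x i) = t := by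
        funext x i; simp
      rw [he]; exact hft
    | succ k ih =>
      intro hk
      have hkn : k < n := hk
      have ihk := ih (le_of_lt hkn)
      set i₀ : Fin n := ⟨k, hkn⟩ with hi₀
      set u : Profile n A := fun x i => if i.val < k then s x i else t x i with hu
      set v : Profile n A := fun x i => if i.val < k + 1 then s x i else t x i with hv
      have hagree : ∀ j : Fin n, j ≠ i₀ → ∀ x : A, v x j = u x j := by
        intro j hj x
        have hjk : (j : ℕ) ≠ k := fun hjk => hj (Fin.ext hjk)
        by_cases hlt : (j : ℕ) < k
        · simp [hu, hv, hlt, Nat.lt_succ_of_lt hlt]; intro h; omega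
        · have h1 : ¬ (j : ℕ) < k + 1 := by omega
          simp [hu, hv, hlt, h1]; intro h; omega
      by_cases hfv : f v = a
      · exact hfv
      · exfalso
        have hm := weak_mono hp u v i₀ hagree
        rw [ihk] at hm
        have hui : ∀ x : A, u x i₀ = t x i₀ := by
          intro x; simp [hu]; intro h; exact absurd h (by simp [hi₀])
        have hvi : ∀ x : A, v x i₀ = s x i₀ := by
          intro x; simp [hv]; intro h; exact absurd h (by simp [hi₀])
        rw [hui, hui, hvi, hvi] at hm
        have := hst (f v) hfv i₀
        linarith
  have hs : (fun (x : A) (i : Fin n) => if i.val < n then s x i else t x i) = s := by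
    funext x i; simp [i.isLt]
  have := key n le_rfl
  rwa [hs] at this

lemma choice_to_f {n : ℕ} {A : Type*} [Fintype A] [DecidableEq A]
    {f : Profile n A → A} {p : Profile n A → Fin n → ℝ} (hp : Implements f p)
    (a b : A) (hba : b ≠ a) (t s : Profile n A)
    (ha : a ∈ ChoiceSet f t)
    (hst : ∀ x : A, x ≠ a → ∀ i, t a i - t x i < s a i - s x i) : f s = a := by
  have hne : (Finset.univ.erase a).Nonempty :=
    ⟨b, Finset.mem_erase.mpr ⟨hba, Finset.mem_univ b⟩⟩
  set δ : Fin n → ℝ := fun i =>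
    ((Finset.univ.erase a).inf' hne (fun x => (s a i - s x i) - (t a i - t x i))) / 2 with hδ
  have hinf_le : ∀ (x : A), x ≠ a → ∀ i, 2 * δ i ≤ (s a i - s x i) - (t a i - t x i) := by
    intro x hx i
    have : (Finset.univ.erase a).inf' hne (fun x => (s a i - s x i) - (t a i - t x i))
        ≤ (s a i - s x i) - (t a i - t x i) :=
      Finset.inf'_le _ (Finset.mem_erase.mpr ⟨hx, Finset.mem_univ x⟩)
    rw [hδ]; simp only; linarith
  have hδpos : ∀ i, 0 < δ i := by
    intro i
    have : (0:ℝ) < (Finset.univ.erase a).inf' hne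
        (fun x => (s a i - s x i) - (t a i - t x i)) := by
      rw [Finset.lt_inf'_iff]
      intro x hx
      have hx' := (Finset.mem_erase.mp hx).1
      have := hst x hx' i
      linarith
    rw [hδ]; linarith
  have hft' : f (Function.update t a (t a + δ)) = a := ha δ hδpos
  refine stays hp a (Function.update t a (t a + δ)) s ?_ hft'
  intro x hx i
  rw [Function.update_self, Function.update_of_ne hx]
  have h1 := hinf_le x hx i
  have h2 := hδpos i
  simp only [Pi.add_apply]
  linarith

/-- if `β - ε ∈ P^f(a,b)` for some `ε ≫ 0`, then `-β ∉ P^f(b,a)`. -/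
theorem pset_no_reversal
    {n : ℕ} {A : Type*} [Fintype A] [DecidableEq A]
    (hn : 0 < n) (hA : 3 ≤ Fintype.card A)
    (f : Profile n A → A)
    (hf : Implementable f) (hni : NonImposition f)
    (a b : A) (hab : a ≠ b)
    (β ε : Fin n → ℝ) (hε : ∀ i, 0 < ε i)
    (h : β - ε ∈ RPSet f a b) :
    -β ∉ RPSet f b a := by
  obtain ⟨p, hp⟩ := hf
  obtain ⟨t, hat, htab⟩ := h
  rintro ⟨s, hbs, hsba⟩
  have ht : ∀ i, t a i - t b i = β i - ε i := by
    intro i; have := congrFun htab i; simpa using this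
  have hs : ∀ i, s b i - s a i = -β i := by
    intro i; have := congrFun hsba i; simpa using this
  set u : Profile n A := fun x i =>
    if x = a then β i - ε i / 2
    else if x = b then 0
    else min (β i - ε i / 2 - (t a i - t x i)) (-(s b i - s x i)) - 1 with hu
  have hua : ∀ i, u a i = β i - ε i / 2 := by intro i; simp [hu]
  have hub : ∀ i, u b i = 0 := by intro i; simp [hu, hab.symm]
  have hux : ∀ x : A, x ≠ a → x ≠ b → ∀ i,
      u x i = min (β i - ε i / 2 - (t a i - t x i)) (-(s b i - s x i)) - 1 := by
    intro x hxa hxb i; simp [hu, hxa, hxb]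
  have hfa : f u = a := by
    refine choice_to_f hp a b hab.symm t u hat ?_
    intro x hx i
    by_cases hxb : x = b
    · subst hxb
      rw [hua, hub, ht i]
      have := hε i; linarith
    · rw [hua, hux x hx hxb i]
      have := min_le_left (β i - ε i / 2 - (t a i - t x i)) (-(s b i - s x i))
      linarith
  have hfb : f u = b := by
    refine choice_to_f hp b a hab s u hbs ?_
    intro x hx i
    by_cases hxa : x = a
    · subst hxa
      rw [hua, hub, hs i]
      have := hε i; linarith
    · rw [hub, hux x hxa hx i]
      have := min_le_right (β i - ε i / 2 - (t a i - t x i)) (-(s b i - s x i))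
      linarith
  exact hab (hfa.symm.trans hfb)
end
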